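/- arXiv:2004.07494 — 4 statements merged into one kernel-verified Lean document; each statement's English description precedes it below -/
import Mathlib

section
/- Let A be strictly positive and let T1, T2 be bounded linear operators on H each admitting an A-adjoint (i.e. for each i there exists S_i with A∘S_i = T_i*∘A). Then w_B([[T1,T2],[0,0]]) ≥ (1/2)·max{w_A(T1+T2), w_A(T1-T2), w_A(T1+iT2), w_A(T1-iT2)}. -/
open scoped InnerProductSpace
open ContinuousLinearMap

variable {H : Type*} [NormedAddCommGroup H] [InnerProductSpace ℂ H] [CompleteSpace H]

/-- The `A`-seminorm `‖x‖_A = √⟨Ax,x⟩`. -/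
noncomputable def aNorm (A : H →L[ℂ] H) (x : H) : ℝ :=
  Real.sqrt (⟪A x, x⟫_ℂ).re

/-- The `A`-numerical radius `w_A(T) = sup {|⟨ATx,x⟩| : x ∈ H, ‖x‖_A = 1}`. -/
noncomputable def wA (A T : H →L[ℂ] H) : ℝ :=
  sSup {r : ℝ | ∃ x : H, aNorm A x = 1 ∧ r = ‖⟪A (T x), x⟫_ℂ‖}

/-- The `A`-operator seminorm `‖T‖_A = sup {‖Tx‖_A : x ∈ closure (range A), ‖x‖_A = 1}`. -/
noncomputable def aOpNorm (A T : H →L[ℂ] H) : ℝ :=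
  sSup {r : ℝ | ∃ x : H, x ∈ closure (Set.range (⇑A)) ∧ aNorm A x = 1 ∧ r = aNorm A (T x)}

/-- The `B`-numerical radius of the operator matrix `[[T1,T2],[T3,T4]]` acting on `H ⊕ H` by
`(x, y) ↦ (T1 x + T2 y, T3 x + T4 y)`, where `B = [[A,0],[0,A]]`:
`w_B(T) = sup {|⟨BTz,z⟩| : z ∈ H ⊕ H, ‖z‖_B = 1}`. -/
noncomputable def wB (A T1 T2 T3 T4 : H →L[ℂ] H) : ℝ :=
  sSup {r : ℝ | ∃ x y : H, Real.sqrt ((⟪A x, x⟫_ℂ).re + (⟪A y, y⟫_ℂ).re) = 1 ∧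
    r = ‖⟪A (T1 x + T2 y), x⟫_ℂ + ⟪A (T3 x + T4 y), y⟫_ℂ‖}

/-- Auxiliary sequence lemma: if `b (n+1) ^ 2 ≤ b (n+2) * b n` and `b n ≤ C * K ^ n`,
then `b 1 ≤ K * b 0`. -/
lemma seq_bound (b : ℕ → ℝ) (hb : ∀ n, 0 ≤ b n)
    (hrec : ∀ n, (b (n + 1)) ^ 2 ≤ b (n + 2) * b n)
    (C K : ℝ) (hK : 1 ≤ K) (hC : 0 ≤ C) (hgrow : ∀ n, b n ≤ C * K ^ n) :
    b 1 ≤ K * b 0 := by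
  have hKpos : (0:ℝ) < K := lt_of_lt_of_le one_pos hK
  have P : ∀ k, b 1 * b k ≤ b 0 * b (k + 1) := by
    intro k
    induction k with
    | zero => rw [mul_comm]
    | succ k ih =>
      rcases eq_or_lt_of_le (hb (k + 1)) with h0 | hpos
      · rw [← h0, mul_zero]
        exact mul_nonneg (hb 0) (hb (k + 2))
      · have h1 : b 1 * b (k + 1) * b (k + 1) ≤ b 0 * b (k + 2) * b (k + 1) := by
          calc b 1 * b (k + 1) * b (k + 1) = b 1 * (b (k + 1)) ^ 2 := by ring
            _ ≤ b 1 * (b (k + 2) * b k) :=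
              mul_le_mul_of_nonneg_left (hrec k) (hb 1)
            _ = b (k + 2) * (b 1 * b k) := by ring
            _ ≤ b (k + 2) * (b 0 * b (k + 1)) :=
              mul_le_mul_of_nonneg_left ih (hb (k + 2))
            _ = b 0 * b (k + 2) * b (k + 1) := by ring
        exact le_of_mul_le_mul_right h1 hpos
  have Q : ∀ n, b 1 ^ (n + 1) ≤ b (n + 1) * b 0 ^ n := by
    intro n
    induction n with
    | zero => simp
    | succ n ih =>
      calc b 1 ^ (n + 2) = b 1 * b 1 ^ (n + 1) := by ring
        _ ≤ b 1 * (b (n + 1) * b 0 ^ n) := mul_le_mul_of_nonneg_left ih (hb 1)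
        _ = (b 1 * b (n + 1)) * b 0 ^ n := by ring
        _ ≤ (b 0 * b (n + 2)) * b 0 ^ n :=
          mul_le_mul_of_nonneg_right (P (n + 1)) (pow_nonneg (hb 0) n)
        _ = b (n + 2) * b 0 ^ (n + 1) := by ring
  by_contra hcon
  push_neg at hcon
  rcases eq_or_lt_of_le (hb 0) with h0 | hpos
  · -- b 0 = 0
    have h2 := Q 1
    rw [← h0] at h2
    norm_num at h2
    have hb1 : b 1 = 0 := by nlinarith [hb 1]
    rw [hb1, ← h0, mul_zero] at hcon
    exact absurd hcon (lt_irrefl 0)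
  · -- b 0 > 0
    set q : ℝ := b 1 / (K * b 0) with hq
    have hq1 : 1 < q := by
      rw [hq, lt_div_iff₀ (by positivity)]
      linarith [hcon]
    obtain ⟨n, hn⟩ := pow_unbounded_of_one_lt (C / b 0) hq1
    have h3 : b 1 ^ (n + 1) ≤ C * K ^ (n + 1) * b 0 ^ n :=
      le_trans (Q n) (mul_le_mul_of_nonneg_right (hgrow (n + 1)) (pow_nonneg (hb 0) n))
    have h4 : q ^ (n + 1) ≤ C / b 0 := by
      have hkb : (0:ℝ) < (K * b 0) ^ (n + 1) := by positivity
      rw [hq, div_pow, div_le_iff₀ hkb]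
      calc b 1 ^ (n + 1) ≤ C * K ^ (n + 1) * b 0 ^ n := h3
        _ = C / b 0 * (K * b 0) ^ (n + 1) := by
            rw [mul_pow]
            field_simp
            ring
    have h5 : C / b 0 < q ^ (n + 1) :=
      lt_of_lt_of_le hn (pow_le_pow_right₀ (le_of_lt hq1) (Nat.le_succ n))
    linarith

/-- If `T` and `S` intertwine suitably with `R`, then `T` is `R`-bounded. -/
lemma aBound (R T S : H →L[ℂ] H)
    (hTS : ∀ u : H, ‖R (T u)‖ ^ 2 ≤ ‖R (S (T u))‖ * ‖R u‖)
    (hST : ∀ u : H, ‖R (S u)‖ ^ 2 ≤ ‖R (T (S u))‖ * ‖R u‖) (x : H) :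
    ‖R (T x)‖ ≤ max (max ‖T‖ ‖S‖) 1 * ‖R x‖ := by
  set K : ℝ := max (max ‖T‖ ‖S‖) 1 with hKdef
  have hK : 1 ≤ K := le_max_right _ _
  have hK0 : (0:ℝ) ≤ K := by linarith
  have hTK : ‖T‖ ≤ K := le_trans (le_max_left _ _) (le_max_left _ _)
  have hSK : ‖S‖ ≤ K := le_trans (le_max_right _ _) (le_max_left _ _)
  let w : ℕ → H := fun n => Nat.rec x (fun k u => if k % 2 = 0 then T u else S u) n
  have hwsucc : ∀ n, w (n + 1) = if n % 2 = 0 then T (w n) else S (w n) := fun n => rfl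
  have hgroww : ∀ n, ‖w n‖ ≤ K ^ n * ‖x‖ := by
    intro n
    induction n with
    | zero => simp [w]
    | succ n ih =>
      rw [hwsucc n]
      have hKn : (0:ℝ) ≤ K ^ n := pow_nonneg hK0 n
      have step : ∀ U : H →L[ℂ] H, ‖U‖ ≤ K → ‖U (w n)‖ ≤ K ^ (n + 1) * ‖x‖ := by
        intro U hU
        calc ‖U (w n)‖ ≤ ‖U‖ * ‖w n‖ := U.le_opNorm _
          _ ≤ K * (K ^ n * ‖x‖) := mul_le_mul hU ih (norm_nonneg _) hK0
          _ = K ^ (n + 1) * ‖x‖ := by ring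
      by_cases h : n % 2 = 0
      · rw [if_pos h]; exact step T hTK
      · rw [if_neg h]; exact step S hSK
  have hb1 : ‖R (T x)‖ ≤ K * ‖R x‖ := by
    apply seq_bound (fun n => ‖R (w n)‖) (fun n => norm_nonneg _) ?_ (‖R‖ * ‖x‖) K hK (by positivity)
    · intro n
      calc ‖R (w n)‖ ≤ ‖R‖ * ‖w n‖ := R.le_opNorm _
        _ ≤ ‖R‖ * (K ^ n * ‖x‖) := mul_le_mul_of_nonneg_left (hgroww n) (norm_nonneg R)
        _ = ‖R‖ * ‖x‖ * K ^ n := by ring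
    · intro n
      have h1 : (n + 1) % 2 = if n % 2 = 0 then 1 else 0 := by
        by_cases h : n % 2 = 0 <;> simp [h] <;> omega
      by_cases h : n % 2 = 0
      · have e1 : w (n + 1) = T (w n) := by rw [hwsucc n, if_pos h]
        have e2 : w (n + 2) = S (w (n + 1)) := by
          rw [hwsucc (n + 1)]
          have : (n + 1) % 2 ≠ 0 := by omega
          rw [if_neg this]
        show ‖R (w (n+1))‖ ^ 2 ≤ ‖R (w (n+2))‖ * ‖R (w n)‖
        rw [e1, e2, e1]
        exact hTS (w n)
      · have e1 : w (n + 1) = S (w n) := by rw [hwsucc n, if_neg h]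
        have e2 : w (n + 2) = T (w (n + 1)) := by
          rw [hwsucc (n + 1)]
          have : (n + 1) % 2 = 0 := by omega
          rw [if_pos this]
        show ‖R (w (n+1))‖ ^ 2 ≤ ‖R (w (n+2))‖ * ‖R (w n)‖
        rw [e1, e2, e1]
        exact hST (w n)
  exact hb1

set_option synthInstance.maxHeartbeats 1000000 in
set_option maxHeartbeats 1000000 in
theorem stmt13 (A T1 T2 : H →L[ℂ] H) (hA : A.IsPositive) (hA' : ∀ x : H, x ≠ 0 → 0 < (⟪A x, x⟫_ℂ).re)
    (h1 : ∃ S : H →L[ℂ] H, A ∘L S = (ContinuousLinearMap.adjoint T1) ∘L A)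
    (h2 : ∃ S : H →L[ℂ] H, A ∘L S = (ContinuousLinearMap.adjoint T2) ∘L A) :
    wB A T1 T2 0 0 ≥
      (1 / 2) * max (max (wA A (T1 + T2)) (wA A (T1 - T2)))
        (max (wA A (T1 + Complex.I • T2)) (wA A (T1 - Complex.I • T2))) := by
  obtain ⟨S1, hS1⟩ := h1
  obtain ⟨S2, hS2⟩ := h2
  have hApos : (0 : H →L[ℂ] H) ≤ A := (nonneg_iff_isPositive A).2 hA
  set R : H →L[ℂ] H := CFC.sqrt A with hRdef
  have hRpos : (0 : H →L[ℂ] H) ≤ R := CFC.sqrt_nonneg (a := A)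
  have hRR : R * R = A := CFC.sqrt_mul_sqrt_self A hApos
  have hRsa : IsSelfAdjoint R := ((nonneg_iff_isPositive R).1 hRpos).isSelfAdjoint
  have hRadj : adjoint R = R := hRsa.adjoint_eq
  have hAadj : adjoint A = A := hA.isSelfAdjoint.adjoint_eq
  have hRR' : ∀ u, R (R u) = A u := fun u => by rw [← hRR]; rfl
  -- the fundamental identity
  have key : ∀ u v : H, ⟪A u, v⟫_ℂ = ⟪R u, R v⟫_ℂ := by
    intro u v
    have h := adjoint_inner_left (𝕜 := ℂ) R v (R u)
    rw [hRadj] at h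
    rw [← hRR' u]
    exact h
  have hnorm : ∀ u : H, (⟪A u, u⟫_ℂ).re = ‖R u‖ ^ 2 := by
    intro u
    rw [key u u]
    exact inner_self_eq_norm_sq (𝕜 := ℂ) (R u)
  -- adjoint intertwining identities
  have hAd1 : ∀ z : H, adjoint T1 (A z) = A (S1 z) := fun z =>
    (ContinuousLinearMap.ext_iff.mp hS1 z).symm
  have hAd2 : ∀ z : H, adjoint T2 (A z) = A (S2 z) := fun z =>
    (ContinuousLinearMap.ext_iff.mp hS2 z).symm
  have hS1' : adjoint S1 ∘L A = A ∘L T1 := by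
    have := congrArg ContinuousLinearMap.adjoint hS1
    rw [adjoint_comp, adjoint_comp, hAadj, adjoint_adjoint] at this
    exact this
  have hS2' : adjoint S2 ∘L A = A ∘L T2 := by
    have := congrArg ContinuousLinearMap.adjoint hS2
    rw [adjoint_comp, adjoint_comp, hAadj, adjoint_adjoint] at this
    exact this
  have hAd1' : ∀ z : H, adjoint S1 (A z) = A (T1 z) := fun z =>
    ContinuousLinearMap.ext_iff.mp hS1' z
  have hAd2' : ∀ z : H, adjoint S2 (A z) = A (T2 z) := fun z =>
    ContinuousLinearMap.ext_iff.mp hS2' z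
  -- semi Cauchy-Schwarz consequences
  have CS : ∀ u v : H, ‖⟪A u, v⟫_ℂ‖ ≤ ‖R u‖ * ‖R v‖ := by
    intro u v
    rw [key u v]
    exact norm_inner_le_norm (𝕜 := ℂ) _ _
  -- generic step inequality
  have stepIneq : ∀ (T S : H →L[ℂ] H), (∀ z : H, adjoint T (A z) = A (S z)) →
      ∀ u : H, ‖R (T u)‖ ^ 2 ≤ ‖R (S (T u))‖ * ‖R u‖ := by
    intro T S hAd u
    have e1 : ⟪A (T u), T u⟫_ℂ = ⟪A (S (T u)), u⟫_ℂ := by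
      rw [← hAd (T u)]
      exact (adjoint_inner_left (𝕜 := ℂ) T u (A (T u))).symm
    calc ‖R (T u)‖ ^ 2 = (⟪A (T u), T u⟫_ℂ).re := (hnorm (T u)).symm
      _ = (⟪A (S (T u)), u⟫_ℂ).re := by rw [e1]
      _ ≤ ‖⟪A (S (T u)), u⟫_ℂ‖ := Complex.re_le_norm _
      _ ≤ ‖R (S (T u))‖ * ‖R u‖ := CS _ _
  -- A-boundedness of T1 and T2
  set K1 : ℝ := max (max ‖T1‖ ‖S1‖) 1 with hK1def
  set K2 : ℝ := max (max ‖T2‖ ‖S2‖) 1 with hK2def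
  have hK1 : (1:ℝ) ≤ K1 := le_max_right _ _
  have hK2 : (1:ℝ) ≤ K2 := le_max_right _ _
  have hb1 : ∀ x : H, ‖R (T1 x)‖ ≤ K1 * ‖R x‖ := fun x =>
    aBound R T1 S1 (stepIneq T1 S1 hAd1) (stepIneq S1 T1 hAd1') x
  have hb2 : ∀ x : H, ‖R (T2 x)‖ ≤ K2 * ‖R x‖ := fun x =>
    aBound R T2 S2 (stepIneq T2 S2 hAd2) (stepIneq S2 T2 hAd2') x
  -- the set defining wB is bounded above
  set Sb : Set ℝ := {r : ℝ | ∃ x y : H,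
    Real.sqrt ((⟪A x, x⟫_ℂ).re + (⟪A y, y⟫_ℂ).re) = 1 ∧
    r = ‖⟪A (T1 x + T2 y), x⟫_ℂ + ⟪A ((0:H →L[ℂ] H) x + (0:H →L[ℂ] H) y), y⟫_ℂ‖} with hSbdef
  have hwBeq : wB A T1 T2 0 0 = sSup Sb := rfl
  have hbdd : BddAbove Sb := by
    refine ⟨K1 + K2, ?_⟩
    rintro r ⟨x, y, hc, rfl⟩
    have hsum : (⟪A x, x⟫_ℂ).re + (⟪A y, y⟫_ℂ).re = 1 := Real.sqrt_eq_one.mp hc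
    rw [hnorm x, hnorm y] at hsum
    have hx1 : ‖R x‖ ≤ 1 := by nlinarith [norm_nonneg (R x), norm_nonneg (R y), sq_nonneg (‖R x‖ - 1)]
    have hy1 : ‖R y‖ ≤ 1 := by nlinarith [norm_nonneg (R x), norm_nonneg (R y), sq_nonneg (‖R y‖ - 1)]
    have e0 : ⟪A ((0:H →L[ℂ] H) x + (0:H →L[ℂ] H) y), y⟫_ℂ = 0 := by simp
    rw [e0, add_zero]
    have e1 : ⟪A (T1 x + T2 y), x⟫_ℂ = ⟪A (T1 x), x⟫_ℂ + ⟪A (T2 y), x⟫_ℂ := by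
      rw [map_add, inner_add_left]
    rw [e1]
    calc ‖⟪A (T1 x), x⟫_ℂ + ⟪A (T2 y), x⟫_ℂ‖ ≤ ‖⟪A (T1 x), x⟫_ℂ‖ + ‖⟪A (T2 y), x⟫_ℂ‖ :=
          norm_add_le _ _
      _ ≤ ‖R (T1 x)‖ * ‖R x‖ + ‖R (T2 y)‖ * ‖R x‖ := add_le_add (CS _ _) (CS _ _)
      _ ≤ (K1 * ‖R x‖) * ‖R x‖ + (K2 * ‖R y‖) * ‖R x‖ := by
          apply add_le_add <;> apply mul_le_mul_of_nonneg_right _ (norm_nonneg _)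
          · exact hb1 x
          · exact hb2 y
      _ ≤ K1 * 1 + K2 * 1 := by
          have haa : ‖R x‖ * ‖R x‖ ≤ 1 :=
            mul_le_one₀ hx1 (norm_nonneg _) hx1
          have hba : ‖R y‖ * ‖R x‖ ≤ 1 :=
            mul_le_one₀ hy1 (norm_nonneg _) hx1
          have e2 : K1 * ‖R x‖ * ‖R x‖ = K1 * (‖R x‖ * ‖R x‖) := by ring
          have e3 : K2 * ‖R y‖ * ‖R x‖ = K2 * (‖R y‖ * ‖R x‖) := by ring
          rw [e2, e3]
          exact add_le_add (mul_le_mul_of_nonneg_left haa (by linarith))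
            (mul_le_mul_of_nonneg_left hba (by linarith))
      _ = K1 + K2 := by ring
  have hwB0 : 0 ≤ wB A T1 T2 0 0 := by
    rw [hwBeq]
    apply Real.sSup_nonneg
    rintro r ⟨x, y, _, rfl⟩
    positivity
  -- main estimate for each c on the unit circle
  have main : ∀ c : ℂ, ‖c‖ = 1 → wA A (T1 + c • T2) ≤ 2 * wB A T1 T2 0 0 := by
    intro c hc
    apply Real.sSup_le
    · rintro r ⟨x, hx, rfl⟩
      have hx1 : (⟪A x, x⟫_ℂ).re = 1 := Real.sqrt_eq_one.mp hx
      set s : ℝ := (Real.sqrt 2)⁻¹ with hsdef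
      have hs2 : s ^ 2 = 1 / 2 := by
        rw [hsdef, inv_pow, Real.sq_sqrt (by norm_num)]
        norm_num
      have hconjs : (starRingEnd ℂ) (s : ℂ) = (s : ℂ) := Complex.conj_ofReal s
      have hcc : (starRingEnd ℂ) c * c = 1 := by
        rw [RCLike.conj_mul c, hc]
        norm_num
      have hmem : (1 / 2) * ‖⟪A ((T1 + c • T2) x), x⟫_ℂ‖ ∈ Sb := by
        refine ⟨(s : ℂ) • x, ((c * (s : ℂ)) • x), ?_, ?_⟩
        · have hc1 : ⟪A ((s:ℂ) • x), (s:ℂ) • x⟫_ℂ = (s:ℂ) ^ 2 * ⟪A x, x⟫_ℂ := by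
            rw [map_smul, inner_smul_left, inner_smul_right, hconjs]
            ring
          have hc2 : ⟪A ((c * (s:ℂ)) • x), (c * (s:ℂ)) • x⟫_ℂ = (s:ℂ) ^ 2 * ⟪A x, x⟫_ℂ := by
            rw [map_smul, inner_smul_left, inner_smul_right, map_mul, hconjs]
            calc (starRingEnd ℂ) c * (s:ℂ) * (c * (s:ℂ) * ⟪A x, x⟫_ℂ)
                = ((starRingEnd ℂ) c * c) * ((s:ℂ) ^ 2 * ⟪A x, x⟫_ℂ) := by ring
              _ = (s:ℂ) ^ 2 * ⟪A x, x⟫_ℂ := by rw [hcc]; ring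
          have hre : ((s:ℂ) ^ 2 * ⟪A x, x⟫_ℂ).re = s ^ 2 * (⟪A x, x⟫_ℂ).re := by
            have : ((s:ℂ)) ^ 2 = ((s ^ 2 : ℝ) : ℂ) := by push_cast; ring
            rw [this, Complex.re_ofReal_mul]
          rw [hc1, hc2, hre, hx1, hs2]
          norm_num
        · have hexp : (T1 + c • T2) x = T1 x + c • T2 x := by
            simp [ContinuousLinearMap.add_apply, ContinuousLinearMap.smul_apply]
          have hval : ⟪A (T1 ((s:ℂ) • x) + T2 ((c * (s:ℂ)) • x)), (s:ℂ) • x⟫_ℂ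
              = (s:ℂ) ^ 2 * ⟪A ((T1 + c • T2) x), x⟫_ℂ := by
            rw [hexp]
            simp only [map_smul, map_add, inner_add_left, inner_smul_left,
              inner_smul_right, map_mul, hconjs]
            ring
          have hzero : ⟪A ((0 : H →L[ℂ] H) ((s:ℂ) • x) +
              (0 : H →L[ℂ] H) ((c * (s:ℂ)) • x)), (c * (s:ℂ)) • x⟫_ℂ = 0 := by simp
          rw [hzero, add_zero, hval]
          rw [norm_mul, norm_pow, Complex.norm_real, Real.norm_eq_abs, sq_abs, hs2]
      have := le_csSup hbdd hmem
      rw [← hwBeq] at this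
      linarith
    · linarith
  have h1' := main 1 (by norm_num)
  rw [one_smul] at h1'
  have h2' := main (-1) (by norm_num)
  rw [neg_smul, one_smul, ← sub_eq_add_neg] at h2'
  have h3' := main Complex.I (by simp)
  have h4' := main (-Complex.I) (by simp)
  rw [neg_smul, ← sub_eq_add_neg] at h4'
  rw [ge_iff_le]
  have hmax := max_le (max_le h1' h2') (max_le h3' h4')
  linarith
end

section
/- Let A be strictly positive and let T1, T2 be bounded linear operators on H each admitting an A-adjoint (i.e. for each i there exists S_i with A∘S_i = T_i*∘A). Then w_B([[0,T1],[T2,0]]) ≤ w_A(T1) + w_A(T2) - (1/2)·|w_A(T1+T2) - w_A(T1-T2)|. -/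
open scoped InnerProductSpace
open ContinuousLinearMap

variable {H : Type*} [NormedAddCommGroup H] [InnerProductSpace ℂ H] [CompleteSpace H]

lemma re_inner_self (x : H) : (⟪x, x⟫_ℂ).re = ‖x‖^2 := by
  have := inner_self_eq_norm_sq (𝕜 := ℂ) x
  simpa using this

lemma sInner_eq (A P : H →L[ℂ] H) (hPsa : IsSelfAdjoint P) (hPP : P * P = A) (x y : H) :
    ⟪A x, y⟫_ℂ = ⟪P x, P y⟫_ℂ := by
  rw [← hPP, ContinuousLinearMap.mul_apply]
  exact ((isSelfAdjoint_iff_isSymmetric).1 hPsa) (P x) y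

lemma aNorm_eq (A P : H →L[ℂ] H) (hPsa : IsSelfAdjoint P) (hPP : P * P = A) (x : H) :
    aNorm A x = ‖P x‖ := by
  rw [aNorm, sInner_eq A P hPsa hPP, re_inner_self, Real.sqrt_sq (norm_nonneg _)]

lemma wA_bddAbove (A T S P : H →L[ℂ] H) (hPsa : IsSelfAdjoint P) (hPP : P * P = A)
    (hAsa : IsSelfAdjoint A) (hS : A ∘L S = (ContinuousLinearMap.adjoint T) ∘L A) :
    BddAbove {r : ℝ | ∃ x : H, aNorm A x = 1 ∧ r = ‖⟪A (T x), x⟫_ℂ‖} := by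
  set R := S ∘L T with hRdef
  have hP := sInner_eq A P hPsa hPP
  have hAT : ∀ x : H, A (T x) = (ContinuousLinearMap.adjoint S) (A x) := by
    intro x
    have h := congrArg ContinuousLinearMap.adjoint hS
    rw [adjoint_comp, adjoint_comp, adjoint_adjoint, hAsa.adjoint_eq] at h
    exact (DFunLike.congr_fun h x).symm
  have hR1 : ∀ y z : H, ⟪A (R y), z⟫_ℂ = ⟪A y, R z⟫_ℂ := by
    intro y z
    have hAS : A (S (T y)) = (ContinuousLinearMap.adjoint T) (A (T y)) := by
      have := DFunLike.congr_fun hS (T y)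
      simpa using this
    calc ⟪A (R y), z⟫_ℂ = ⟪(ContinuousLinearMap.adjoint T) (A (T y)), z⟫_ℂ := by
            rw [hRdef]; simp only [ContinuousLinearMap.comp_apply]; rw [hAS]
      _ = ⟪A (T y), T z⟫_ℂ := adjoint_inner_left _ _ _
      _ = ⟪(ContinuousLinearMap.adjoint S) (A y), T z⟫_ℂ := by rw [hAT y]
      _ = ⟪A y, S (T z)⟫_ℂ := adjoint_inner_left _ _ _
      _ = ⟪A y, R z⟫_ℂ := rfl
  have hRpow : ∀ (m : ℕ) (y z : H), ⟪A ((R^m) y), z⟫_ℂ = ⟪A y, (R^m) z⟫_ℂ := by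
    intro m
    induction m with
    | zero => intro y z; simp
    | succ n ih =>
      intro y z
      have hh1 : (R^(n+1)) y = (R^n) (R y) := by rw [pow_succ, ContinuousLinearMap.mul_apply]
      have hh2 : (R^(n+1)) z = R ((R^n) z) := by rw [pow_succ', ContinuousLinearMap.mul_apply]
      rw [hh1, hh2, ih, hR1]
  set K := max ‖R‖ 1 with hK
  have hK1 : (1:ℝ) ≤ K := le_max_right _ _
  have hK0 : (0:ℝ) ≤ K := by linarith
  refine ⟨Real.sqrt K, ?_⟩
  rintro r ⟨x, hx1, rfl⟩
  have hx : ‖P x‖ = 1 := by rw [← aNorm_eq A P hPsa hPP]; exact hx1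
  set M := max (‖A x‖ * ‖x‖) 1 with hM
  have hM1 : (1:ℝ) ≤ M := le_max_right _ _
  set e : ℕ → ℝ := fun m => ‖⟪A x, (R^m) x⟫_ℂ‖ with he
  have he_nonneg : ∀ m, 0 ≤ e m := fun m => norm_nonneg _
  -- squares step
  have key2 : ∀ m, e m ^ 2 ≤ e (2*m) := by
    intro m
    have h1 : e m ≤ ‖P ((R^m) x)‖ := by
      calc e m ≤ ‖P x‖ * ‖P ((R^m) x)‖ := by rw [he]; dsimp only; rw [hP]; exact norm_inner_le_norm _ _
        _ = ‖P ((R^m) x)‖ := by rw [hx, one_mul]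
    have h2 : ‖P ((R^m) x)‖^2 ≤ e (2*m) := by
      have : ‖P ((R^m) x)‖^2 = (⟪A ((R^m) x), (R^m) x⟫_ℂ).re := by
        rw [hP, re_inner_self]
      rw [this, hRpow m]
      calc (⟪A x, (R^m) ((R^m) x)⟫_ℂ).re ≤ ‖⟪A x, (R^m) ((R^m) x)⟫_ℂ‖ := Complex.re_le_norm _
        _ = e (2*m) := by rw [he]; dsimp only; rw [two_mul, pow_add, ContinuousLinearMap.mul_apply]
    calc e m ^ 2 ≤ ‖P ((R^m) x)‖^2 := pow_le_pow_left₀ (he_nonneg m) h1 2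
      _ ≤ e (2*m) := h2
  have key3 : ∀ m, e m ≤ M * K ^ m := by
    intro m
    have h1 : e m ≤ ‖A x‖ * ‖(R^m) x‖ := norm_inner_le_norm _ _
    have h2 : ‖(R^m) x‖ ≤ ‖R^m‖ * ‖x‖ := le_opNorm _ _
    rcases Nat.eq_zero_or_pos m with hm | hm
    · subst hm
      simp only [pow_zero, mul_one]
      calc e 0 = ‖⟪A x, x⟫_ℂ‖ := by rw [he]; simp
        _ ≤ ‖A x‖ * ‖x‖ := norm_inner_le_norm _ _
        _ ≤ M := le_max_left _ _
    have h3 : ‖R^m‖ ≤ K^m := by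
      calc ‖R^m‖ ≤ ‖R‖^m := norm_pow_le' R hm
        _ ≤ K^m := pow_le_pow_left₀ (norm_nonneg R) (le_max_left _ _) m
    have hKm : (0:ℝ) ≤ K^m := pow_nonneg hK0 m
    calc e m ≤ ‖A x‖ * ‖(R^m) x‖ := h1
      _ ≤ ‖A x‖ * (‖R^m‖ * ‖x‖) := by
          exact mul_le_mul_of_nonneg_left h2 (norm_nonneg _)
      _ = (‖A x‖ * ‖x‖) * ‖R^m‖ := by ring
      _ ≤ M * K^m := by
          apply mul_le_mul (le_max_left _ _) h3 (norm_nonneg _) (by linarith)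
  have key1 : ‖⟪A (T x), x⟫_ℂ‖ ^ 2 ≤ e 1 := by
    have h1 : ‖⟪A (T x), x⟫_ℂ‖ ≤ ‖P (T x)‖ := by
      calc ‖⟪A (T x), x⟫_ℂ‖ ≤ ‖P (T x)‖ * ‖P x‖ := by rw [hP]; exact norm_inner_le_norm _ _
        _ = ‖P (T x)‖ := by rw [hx, mul_one]
    have h2 : ‖P (T x)‖^2 ≤ e 1 := by
      have h3 : ‖P (T x)‖^2 = (⟪A (T x), T x⟫_ℂ).re := by rw [hP, re_inner_self]
      have h4 : ⟪A (T x), T x⟫_ℂ = ⟪A x, (R^1) x⟫_ℂ := by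
        rw [hAT x, adjoint_inner_left, pow_one]
        rfl
      rw [h3, h4]
      exact le_trans (Complex.re_le_norm _) (le_refl _)
    calc ‖⟪A (T x), x⟫_ℂ‖ ^ 2 ≤ ‖P (T x)‖^2 := pow_le_pow_left₀ (norm_nonneg _) h1 2
      _ ≤ e 1 := h2
  have key4 : ∀ n : ℕ, e 1 ≤ (e (2^n)) ^ (((2:ℝ)^n)⁻¹) := by
    intro n
    induction n with
    | zero => simp [Real.rpow_one]
    | succ n ih =>
      have h2 : e (2^n) ≤ (e (2^(n+1))) ^ ((1:ℝ)/2) := by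
        have := key2 (2^n)
        rw [← pow_succ'] at this
        calc e (2^n) = ((e (2^n))^2) ^ ((1:ℝ)/2) := by
              rw [← Real.rpow_natCast (e (2^n)) 2, ← Real.rpow_mul (he_nonneg _)]
              norm_num
          _ ≤ (e (2^(n+1))) ^ ((1:ℝ)/2) :=
              Real.rpow_le_rpow (by positivity) this (by norm_num)
      calc e 1 ≤ (e (2^n)) ^ (((2:ℝ)^n)⁻¹) := ih
        _ ≤ ((e (2^(n+1))) ^ ((1:ℝ)/2)) ^ (((2:ℝ)^n)⁻¹) :=
            Real.rpow_le_rpow (he_nonneg _) h2 (by positivity)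
        _ = (e (2^(n+1))) ^ (((2:ℝ)^(n+1))⁻¹) := by
            rw [← Real.rpow_mul (he_nonneg _)]
            congr 1
            rw [pow_succ]
            field_simp
  have key5 : ∀ n : ℕ, e 1 ≤ M ^ (((2:ℝ)^n)⁻¹) * K := by
    intro n
    have hpos : (0:ℝ) < ((2:ℝ)^n)⁻¹ := by positivity
    calc e 1 ≤ (e (2^n)) ^ (((2:ℝ)^n)⁻¹) := key4 n
      _ ≤ (M * K ^ (2^n : ℕ)) ^ (((2:ℝ)^n)⁻¹) :=
          Real.rpow_le_rpow (he_nonneg _) (key3 _) (le_of_lt hpos)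
      _ = M ^ (((2:ℝ)^n)⁻¹) * (K ^ (2^n : ℕ)) ^ (((2:ℝ)^n)⁻¹) :=
          Real.mul_rpow (by linarith) (pow_nonneg hK0 _)
      _ = M ^ (((2:ℝ)^n)⁻¹) * K := by
          congr 1
          rw [← Real.rpow_natCast K (2^n), ← Real.rpow_mul hK0]
          rw [Nat.cast_pow]
          push_cast
          rw [mul_inv_cancel₀ (by positivity), Real.rpow_one]
  have hlim : Filter.Tendsto (fun n : ℕ => M ^ (((2:ℝ)^n)⁻¹) * K) Filter.atTop (nhds K) := by
    have h0 : Filter.Tendsto (fun n : ℕ => ((2:ℝ)^n)⁻¹) Filter.atTop (nhds 0) :=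
      tendsto_inv_atTop_zero.comp (tendsto_pow_atTop_atTop_of_one_lt one_lt_two)
    have h1 : Filter.Tendsto (fun n : ℕ => M ^ (((2:ℝ)^n)⁻¹)) Filter.atTop (nhds 1) := by
      have hc : ContinuousAt (fun y : ℝ => M ^ y) 0 :=
        Real.continuousAt_const_rpow (by linarith : M ≠ 0)
      have := hc.tendsto.comp h0
      simpa [Real.rpow_zero, Function.comp_def] using this
    have := h1.mul_const K
    simpa using this
  have he1K : e 1 ≤ K := ge_of_tendsto' hlim key5
  have : ‖⟪A (T x), x⟫_ℂ‖ ^2 ≤ K := le_trans key1 he1K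
  exact (Real.le_sqrt (norm_nonneg _) hK0).2 this

lemma pw_pos (A P : H →L[ℂ] H) (hPsa : IsSelfAdjoint P) (hPP : P * P = A)
    (hA' : ∀ x : H, x ≠ 0 → 0 < (⟪A x, x⟫_ℂ).re) (w : H) (hw : w ≠ 0) : 0 < ‖P w‖ := by
  have h := hA' w hw
  rw [sInner_eq A P hPsa hPP, re_inner_self] at h
  nlinarith [norm_nonneg (P w)]

lemma exists_unit (A P : H →L[ℂ] H) (hPsa : IsSelfAdjoint P) (hPP : P * P = A)
    (hA' : ∀ x : H, x ≠ 0 → 0 < (⟪A x, x⟫_ℂ).re) (w : H) (hw : w ≠ 0) :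
    ∃ x : H, aNorm A x = 1 := by
  have ht : 0 < ‖P w‖ := pw_pos A P hPsa hPP hA' w hw
  refine ⟨((‖P w‖ : ℂ))⁻¹ • w, ?_⟩
  rw [aNorm_eq A P hPsa hPP, map_smul, norm_smul]
  simp [abs_of_pos ht]
  field_simp

lemma wA_pointwise (A C P : H →L[ℂ] H) (hPsa : IsSelfAdjoint P) (hPP : P * P = A)
    (hA' : ∀ x : H, x ≠ 0 → 0 < (⟪A x, x⟫_ℂ).re)
    (hbdd : BddAbove {r : ℝ | ∃ x : H, aNorm A x = 1 ∧ r = ‖⟪A (C x), x⟫_ℂ‖}) (w : H) :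
    ‖⟪A (C w), w⟫_ℂ‖ ≤ wA A C * ‖P w‖^2 := by
  by_cases hw : w = 0
  · simp [hw]
  · have ht : 0 < ‖P w‖ := pw_pos A P hPsa hPP hA' w hw
    set t := ‖P w‖ with htdef
    set c : ℂ := ((t : ℂ))⁻¹ with hcdef
    set w' := c • w with hw'def
    have hw' : aNorm A w' = 1 := by
      rw [aNorm_eq A P hPsa hPP, hw'def, map_smul, norm_smul, hcdef]
      simp [abs_of_pos ht]
      field_simp
      exact htdef.symm
    have hmem : ‖⟪A (C w'), w'⟫_ℂ‖ ∈
        {r : ℝ | ∃ x : H, aNorm A x = 1 ∧ r = ‖⟪A (C x), x⟫_ℂ‖} := ⟨w', hw', rfl⟩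
    have hle : ‖⟪A (C w'), w'⟫_ℂ‖ ≤ wA A C := le_csSup hbdd hmem
    have heq : ‖⟪A (C w'), w'⟫_ℂ‖ = t⁻¹ * t⁻¹ * ‖⟪A (C w), w⟫_ℂ‖ := by
      rw [hw'def, map_smul, map_smul, inner_smul_left, inner_smul_right, norm_mul, norm_mul,
        hcdef]
      have : ‖(starRingEnd ℂ) ((t:ℂ))⁻¹‖ = t⁻¹ := by
        simp [abs_of_pos ht]
      rw [this]
      have : ‖((t:ℂ))⁻¹‖ = t⁻¹ := by simp [abs_of_pos ht]
      rw [this]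
      ring
    rw [heq] at hle
    calc ‖⟪A (C w), w⟫_ℂ‖ = t^2 * (t⁻¹ * t⁻¹ * ‖⟪A (C w), w⟫_ℂ‖) := by
          field_simp
      _ ≤ t^2 * wA A C := mul_le_mul_of_nonneg_left hle (by positivity)
      _ = wA A C * t^2 := by ring

set_option maxHeartbeats 2000000 in
theorem stmt17 (A T1 T2 : H →L[ℂ] H) (hA : A.IsPositive) (hA' : ∀ x : H, x ≠ 0 → 0 < (⟪A x, x⟫_ℂ).re)
    (h1 : ∃ S : H →L[ℂ] H, A ∘L S = (ContinuousLinearMap.adjoint T1) ∘L A)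
    (h2 : ∃ S : H →L[ℂ] H, A ∘L S = (ContinuousLinearMap.adjoint T2) ∘L A) :
    wB A 0 T1 T2 0 ≤
      wA A T1 + wA A T2 - (1 / 2) * |wA A (T1 + T2) - wA A (T1 - T2)| := by
  obtain ⟨S1, hS1⟩ := h1
  obtain ⟨S2, hS2⟩ := h2
  have hA0 : (0:H→L[ℂ]H) ≤ A := (ContinuousLinearMap.nonneg_iff_isPositive A).2 hA
  obtain ⟨P, hPsa, hPP⟩ : ∃ P : H →L[ℂ] H, IsSelfAdjoint P ∧ P * P = A :=
    ⟨CFC.sqrt A, IsSelfAdjoint.of_nonneg (CFC.sqrt_nonneg A), CFC.sqrt_mul_sqrt_self A hA0⟩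
  have hAsa : IsSelfAdjoint A := hA.isSelfAdjoint
  have hP := sInner_eq A P hPsa hPP
  have hSC : A ∘L (S1 + S2) = (ContinuousLinearMap.adjoint (T1 + T2)) ∘L A := by
    rw [ContinuousLinearMap.comp_add, map_add, ContinuousLinearMap.add_comp, hS1, hS2]
  have hSD : A ∘L (S1 - S2) = (ContinuousLinearMap.adjoint (T1 - T2)) ∘L A := by
    rw [ContinuousLinearMap.comp_sub, map_sub, ContinuousLinearMap.sub_comp, hS1, hS2]
  have bdd1 := wA_bddAbove A T1 S1 P hPsa hPP hAsa hS1
  have bdd2 := wA_bddAbove A T2 S2 P hPsa hPP hAsa hS2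
  have bddC := wA_bddAbove A (T1+T2) (S1+S2) P hPsa hPP hAsa hSC
  have bddD := wA_bddAbove A (T1-T2) (S1-S2) P hPsa hPP hAsa hSD
  by_cases hne : ∃ x : H, aNorm A x = 1
  · obtain ⟨x₀, hx₀⟩ := hne
    set w1 := wA A T1 with hw1
    set w2 := wA A T2 with hw2
    set a := wA A (T1 + T2) with ha'
    set b := wA A (T1 - T2) with hb'
    have ha : a ≤ w1 + w2 := by
      have hne1 : Set.Nonempty {r : ℝ | ∃ x : H, aNorm A x = 1 ∧ r = ‖⟪A ((T1+T2) x), x⟫_ℂ‖} :=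
        ⟨‖⟪A ((T1+T2) x₀), x₀⟫_ℂ‖, x₀, hx₀, rfl⟩
      apply csSup_le hne1
      rintro r ⟨x, hx, rfl⟩
      have e1 : ‖⟪A (T1 x), x⟫_ℂ‖ ≤ w1 := le_csSup bdd1 ⟨x, hx, rfl⟩
      have e2 : ‖⟪A (T2 x), x⟫_ℂ‖ ≤ w2 := le_csSup bdd2 ⟨x, hx, rfl⟩
      calc ‖⟪A ((T1+T2) x), x⟫_ℂ‖ = ‖⟪A (T1 x), x⟫_ℂ + ⟪A (T2 x), x⟫_ℂ‖ := by
            rw [ContinuousLinearMap.add_apply, map_add, inner_add_left]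
        _ ≤ ‖⟪A (T1 x), x⟫_ℂ‖ + ‖⟪A (T2 x), x⟫_ℂ‖ := norm_add_le _ _
        _ ≤ w1 + w2 := add_le_add e1 e2
    have hb : b ≤ w1 + w2 := by
      have hne1 : Set.Nonempty {r : ℝ | ∃ x : H, aNorm A x = 1 ∧ r = ‖⟪A ((T1-T2) x), x⟫_ℂ‖} :=
        ⟨‖⟪A ((T1-T2) x₀), x₀⟫_ℂ‖, x₀, hx₀, rfl⟩
      apply csSup_le hne1
      rintro r ⟨x, hx, rfl⟩
      have e1 : ‖⟪A (T1 x), x⟫_ℂ‖ ≤ w1 := le_csSup bdd1 ⟨x, hx, rfl⟩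
      have e2 : ‖⟪A (T2 x), x⟫_ℂ‖ ≤ w2 := le_csSup bdd2 ⟨x, hx, rfl⟩
      calc ‖⟪A ((T1-T2) x), x⟫_ℂ‖ = ‖⟪A (T1 x), x⟫_ℂ - ⟪A (T2 x), x⟫_ℂ‖ := by
            rw [ContinuousLinearMap.sub_apply, map_sub, inner_sub_left]
        _ ≤ ‖⟪A (T1 x), x⟫_ℂ‖ + ‖⟪A (T2 x), x⟫_ℂ‖ := norm_sub_le _ _
        _ ≤ w1 + w2 := add_le_add e1 e2
    have hmain : wB A 0 T1 T2 0 ≤ (a + b) / 2 := by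
      apply csSup_le
      · refine ⟨_, x₀, 0, ?_, rfl⟩
        have hx₀' : Real.sqrt (⟪A x₀, x₀⟫_ℂ).re = 1 := hx₀
        simpa using hx₀'
      rintro r ⟨x, y, hxy, rfl⟩
      have hPx2 : (⟪A x, x⟫_ℂ).re = ‖P x‖^2 := by rw [hP x x, re_inner_self]
      have hPy2 : (⟪A y, y⟫_ℂ).re = ‖P y‖^2 := by rw [hP y y, re_inner_self]
      have hsum : ‖P x‖^2 + ‖P y‖^2 = 1 := by
        rw [hPx2, hPy2] at hxy
        have : ‖P x‖^2 + ‖P y‖^2 = 1 := Real.sqrt_eq_one.1 hxy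
        exact this
      set u := x + y with hu
      set v := x - y with hv
      have hpar1 : ‖P u‖^2 + ‖P v‖^2 = 2 := by
        have hl := parallelogram_law_with_norm ℂ (P x) (P y)
        have h1 : P u = P x + P y := map_add _ _ _
        have h2 : P v = P x - P y := map_sub _ _ _
        rw [h1, h2]
        linarith
      have hpar2 : ‖P (u + Complex.I • v)‖^2 + ‖P (u - Complex.I • v)‖^2 = 4 := by
        have hl := parallelogram_law_with_norm ℂ (P u) (Complex.I • P v)
        have h1 : P (u + Complex.I • v) = P u + Complex.I • P v := by
          rw [map_add, map_smul]
        have h2 : P (u - Complex.I • v) = P u - Complex.I • P v := by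
          rw [map_sub, map_smul]
        have h3 : ‖Complex.I • P v‖ = ‖P v‖ := by
          rw [norm_smul]; simp
        rw [h1, h2]
        rw [h3] at hl
        linarith
      have hCu := wA_pointwise A (T1+T2) P hPsa hPP hA' bddC u
      have hCv := wA_pointwise A (T1+T2) P hPsa hPP hA' bddC v
      have hDp := wA_pointwise A (T1-T2) P hPsa hPP hA' bddD (u + Complex.I • v)
      have hDm := wA_pointwise A (T1-T2) P hPsa hPP hA' bddD (u - Complex.I • v)
      -- cross term identity
      have hXid : ⟪A ((T1-T2) (u + Complex.I • v)), u + Complex.I • v⟫_ℂ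
          - ⟪A ((T1-T2) (u - Complex.I • v)), u - Complex.I • v⟫_ℂ
          = (2 * Complex.I) * (⟪A ((T1-T2) u), v⟫_ℂ - ⟪A ((T1-T2) v), u⟫_ℂ) := by
        simp only [map_add, map_sub, map_smul, inner_add_left, inner_add_right,
          inner_sub_left, inner_sub_right, inner_smul_left, inner_smul_right,
          Complex.conj_I, ContinuousLinearMap.sub_apply, ContinuousLinearMap.add_apply]
        ring
      have hXle : ‖⟪A ((T1-T2) u), v⟫_ℂ - ⟪A ((T1-T2) v), u⟫_ℂ‖ ≤ 2 * b := by
        have h1 : ‖(2 * Complex.I) * (⟪A ((T1-T2) u), v⟫_ℂ - ⟪A ((T1-T2) v), u⟫_ℂ)‖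
            = 2 * ‖⟪A ((T1-T2) u), v⟫_ℂ - ⟪A ((T1-T2) v), u⟫_ℂ‖ := by
          rw [norm_mul]
          simp
        have h2 : ‖⟪A ((T1-T2) (u + Complex.I • v)), u + Complex.I • v⟫_ℂ
            - ⟪A ((T1-T2) (u - Complex.I • v)), u - Complex.I • v⟫_ℂ‖
            ≤ b * ‖P (u + Complex.I • v)‖^2 + b * ‖P (u - Complex.I • v)‖^2 :=
          le_trans (norm_sub_le _ _) (add_le_add hDp hDm)
        have h3 : b * ‖P (u + Complex.I • v)‖^2 + b * ‖P (u - Complex.I • v)‖^2 = 4 * b := by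
          rw [← mul_add, hpar2]; ring
        rw [← hXid, h1] at *
        linarith
      -- main identity
      have hq : ⟪A (T1 y), x⟫_ℂ + ⟪A (T2 x), y⟫_ℂ
          = (1/4 : ℂ) * ((⟪A ((T1+T2) u), u⟫_ℂ - ⟪A ((T1+T2) v), v⟫_ℂ)
            + (⟪A ((T1-T2) u), v⟫_ℂ - ⟪A ((T1-T2) v), u⟫_ℂ)) := by
        simp only [hu, hv, map_add, map_sub, inner_add_left, inner_add_right,
          inner_sub_left, inner_sub_right, ContinuousLinearMap.sub_apply,
          ContinuousLinearMap.add_apply]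
        ring
      have hzero : ⟪A ((0:H →L[ℂ] H) x + T1 y), x⟫_ℂ + ⟪A (T2 x + (0:H →L[ℂ] H) y), y⟫_ℂ
          = ⟪A (T1 y), x⟫_ℂ + ⟪A (T2 x), y⟫_ℂ := by
        simp
      rw [hzero, hq]
      have hsum2 : a * ‖P u‖^2 + a * ‖P v‖^2 = 2 * a := by
        rw [← mul_add, hpar1]; ring
      calc ‖(1/4 : ℂ) * ((⟪A ((T1+T2) u), u⟫_ℂ - ⟪A ((T1+T2) v), v⟫_ℂ)
            + (⟪A ((T1-T2) u), v⟫_ℂ - ⟪A ((T1-T2) v), u⟫_ℂ))‖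
          = (1/4) * ‖(⟪A ((T1+T2) u), u⟫_ℂ - ⟪A ((T1+T2) v), v⟫_ℂ)
            + (⟪A ((T1-T2) u), v⟫_ℂ - ⟪A ((T1-T2) v), u⟫_ℂ)‖ := by
            rw [norm_mul]; norm_num
        _ ≤ (1/4) * ((‖⟪A ((T1+T2) u), u⟫_ℂ‖ + ‖⟪A ((T1+T2) v), v⟫_ℂ‖)
            + ‖⟪A ((T1-T2) u), v⟫_ℂ - ⟪A ((T1-T2) v), u⟫_ℂ‖) := by
            have := norm_add_le (⟪A ((T1+T2) u), u⟫_ℂ - ⟪A ((T1+T2) v), v⟫_ℂ)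
              (⟪A ((T1-T2) u), v⟫_ℂ - ⟪A ((T1-T2) v), u⟫_ℂ)
            have h4 := norm_sub_le (⟪A ((T1+T2) u), u⟫_ℂ) (⟪A ((T1+T2) v), v⟫_ℂ)
            linarith
        _ ≤ (1/4) * ((a * ‖P u‖^2 + a * ‖P v‖^2) + 2 * b) := by
            linarith
        _ = (a + b) / 2 := by rw [hsum2]; ring
    rcases abs_cases (a - b) with ⟨h, _⟩ | ⟨h, _⟩ <;> rw [h] <;> linarith
  · push_neg at hne
    have hempty : ∀ (B' : H →L[ℂ] H),
        {r : ℝ | ∃ x : H, aNorm A x = 1 ∧ r = ‖⟪A (B' x), x⟫_ℂ‖} = (∅ : Set ℝ) := by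
      intro B'
      ext r
      simp only [Set.mem_setOf_eq, Set.mem_empty_iff_false, iff_false, not_exists]
      rintro x ⟨hx, -⟩
      exact absurd hx (by simpa using (hne x))
    have hwAzero : ∀ (B' : H →L[ℂ] H), wA A B' = 0 := by
      intro B'
      rw [wA, hempty B', Real.sSup_empty]
    have hwBzero : wB A 0 T1 T2 0 = 0 := by
      have hBempty : {r : ℝ | ∃ x y : H, Real.sqrt ((⟪A x, x⟫_ℂ).re + (⟪A y, y⟫_ℂ).re) = 1 ∧
          r = ‖⟪A ((0:H →L[ℂ] H) x + T1 y), x⟫_ℂ + ⟪A (T2 x + (0:H →L[ℂ] H) y), y⟫_ℂ‖}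
          = (∅ : Set ℝ) := by
        ext r
        simp only [Set.mem_setOf_eq, Set.mem_empty_iff_false, iff_false, not_exists]
        rintro x y ⟨hxy, -⟩
        have hPx2 : (⟪A x, x⟫_ℂ).re = ‖P x‖^2 := by rw [hP x x, re_inner_self]
        have hPy2 : (⟪A y, y⟫_ℂ).re = ‖P y‖^2 := by rw [hP y y, re_inner_self]
        rw [hPx2, hPy2] at hxy
        have hsum : ‖P x‖^2 + ‖P y‖^2 = 1 := Real.sqrt_eq_one.1 hxy
        have : x ≠ 0 ∨ y ≠ 0 := by
          by_contra hc
          push_neg at hc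
          rw [hc.1, hc.2] at hsum
          norm_num [map_zero] at hsum
        rcases this with hx | hy
        · obtain ⟨z, hz⟩ := exists_unit A P hPsa hPP hA' x hx
          exact absurd hz (hne z)
        · obtain ⟨z, hz⟩ := exists_unit A P hPsa hPP hA' y hy
          exact absurd hz (hne z)
      rw [wB, hBempty, Real.sSup_empty]
    rw [hwBzero, hwAzero T1, hwAzero T2, hwAzero (T1+T2), hwAzero (T1-T2)]
    norm_num
end

section
/- Let A be strictly positive, let T be a bounded linear operator on H with A-adjoint S = T^{#_A} (i.e. A∘S = T*∘A and range(S) ⊆ closure(range A)), and let R = S^{#_A} be the A-adjoint of S. Then ‖T‖_A/2 + (‖(S+R)/2‖_A - ‖(S-R)/(2i)‖_A)/2 ≤ w_A(T); that is, ‖T‖_A/2 + (‖Re_A(T^{#_A})‖_A - ‖Im_A(T^{#_A})‖_A)/2 ≤ w_A(T). -/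
open scoped InnerProductSpace
open ContinuousLinearMap

variable {H : Type*} [NormedAddCommGroup H] [InnerProductSpace ℂ H] [CompleteSpace H]

section helpers

variable (A : H →L[ℂ] H)
set_option linter.unusedSectionVars false

lemma reA_nonneg (hA : A.IsPositive) (x : H) : 0 ≤ (⟪A x, x⟫_ℂ).re := hA.2 x

lemma aNorm_nonneg (x : H) : 0 ≤ aNorm A x := Real.sqrt_nonneg _

lemma aNorm_sq (hA : A.IsPositive) (x : H) : aNorm A x ^ 2 = (⟪A x, x⟫_ℂ).re :=
  Real.sq_sqrt (reA_nonneg A hA x)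

lemma innA_symm (hA : A.IsPositive) (x y : H) : ⟪A x, y⟫_ℂ = ⟪x, A y⟫_ℂ := by
  conv_lhs => rw [← hA.isSelfAdjoint.adjoint_eq]
  exact adjoint_inner_left A y x

lemma innA_conj (hA : A.IsPositive) (x y : H) :
    (starRingEnd ℂ) ⟪A x, y⟫_ℂ = ⟪A y, x⟫_ℂ := by
  rw [inner_conj_symm, innA_symm A hA y x]

noncomputable def aCore (hA : A.IsPositive) : PreInnerProductSpace.Core ℂ H where
  inner x y := ⟪A x, y⟫_ℂ
  conj_inner_symm x y := innA_conj A hA y x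
  re_inner_nonneg x := reA_nonneg A hA x
  add_left x y z := by simp [inner_add_left]
  smul_left x y r := by simp [inner_smul_left, mul_comm]

lemma innA_cs (hA : A.IsPositive) (x y : H) :
    ‖⟪A x, y⟫_ℂ‖ ≤ aNorm A x * aNorm A y := by
  have h := @InnerProductSpace.Core.inner_mul_inner_self_le ℂ H _ _ _ (aCore A hA) x y
  have hxy : ‖⟪A y, x⟫_ℂ‖ = ‖⟪A x, y⟫_ℂ‖ := by
    rw [← innA_conj A hA x y, RCLike.norm_conj]
  have h2 : ‖⟪A x, y⟫_ℂ‖ ^ 2 ≤ (aNorm A x * aNorm A y) ^ 2 := by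
    rw [mul_pow, aNorm_sq A hA, aNorm_sq A hA]
    calc ‖⟪A x, y⟫_ℂ‖ ^ 2 = ‖⟪A x, y⟫_ℂ‖ * ‖⟪A y, x⟫_ℂ‖ := by rw [hxy, sq]
    _ ≤ _ := h
  have := Real.sqrt_le_sqrt h2
  rwa [Real.sqrt_sq (norm_nonneg _),
    Real.sqrt_sq (mul_nonneg (aNorm_nonneg A x) (aNorm_nonneg A y))] at this

end helpers

section helpers2

variable (A : H →L[ℂ] H)
set_option linter.unusedSectionVars false

lemma aNorm_zero : aNorm A 0 = 0 := by simp [aNorm]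

lemma aNorm_smul (c : ℂ) (x : H) : aNorm A (c • x) = ‖c‖ * aNorm A x := by
  unfold aNorm
  rw [map_smul, inner_smul_left, inner_smul_right, ← mul_assoc, ← Complex.normSq_eq_conj_mul_self]
  have : ((Complex.normSq c : ℂ) * ⟪A x, x⟫_ℂ).re = ‖c‖ ^ 2 * (⟪A x, x⟫_ℂ).re := by
    rw [Complex.re_ofReal_mul, ← Complex.sq_norm]
  rw [this, Real.sqrt_mul (sq_nonneg _), Real.sqrt_sq (norm_nonneg _)]

lemma aNorm_pos (hA' : ∀ x : H, x ≠ 0 → 0 < (⟪A x, x⟫_ℂ).re) {x : H} (hx : x ≠ 0) :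
    0 < aNorm A x := Real.sqrt_pos.2 (hA' x hx)

lemma aNorm_add (hA : A.IsPositive) (x y : H) :
    aNorm A (x + y) ≤ aNorm A x + aNorm A y := by
  have expand : (⟪A (x + y), x + y⟫_ℂ).re
      = (⟪A x, x⟫_ℂ).re + (⟪A y, y⟫_ℂ).re + 2 * (⟪A x, y⟫_ℂ).re := by
    rw [map_add, inner_add_left, inner_add_right, inner_add_right]
    have hyx : (⟪A y, x⟫_ℂ).re = (⟪A x, y⟫_ℂ).re := by
      rw [← innA_conj A hA x y, Complex.conj_re]
    simp only [Complex.add_re, hyx]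
    ring
  have h1 : (⟪A x, y⟫_ℂ).re ≤ aNorm A x * aNorm A y :=
    le_trans (Complex.re_le_norm _) (by exact innA_cs A hA x y)
  have h2 : (⟪A (x + y), x + y⟫_ℂ).re ≤ (aNorm A x + aNorm A y) ^ 2 := by
    rw [expand, ← aNorm_sq A hA x, ← aNorm_sq A hA y]; nlinarith
  calc aNorm A (x + y) = Real.sqrt (⟪A (x + y), x + y⟫_ℂ).re := rfl
  _ ≤ Real.sqrt ((aNorm A x + aNorm A y) ^ 2) := Real.sqrt_le_sqrt h2
  _ = aNorm A x + aNorm A y :=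
      Real.sqrt_sq (add_nonneg (aNorm_nonneg A x) (aNorm_nonneg A y))

lemma aNorm_le_norm (x : H) : aNorm A x ≤ Real.sqrt ‖A‖ * ‖x‖ := by
  have h : (⟪A x, x⟫_ℂ).re ≤ ‖A‖ * ‖x‖ ^ 2 := by
    calc (⟪A x, x⟫_ℂ).re ≤ ‖⟪A x, x⟫_ℂ‖ := Complex.re_le_norm _
    _ ≤ ‖A x‖ * ‖x‖ := norm_inner_le_norm _ _
    _ ≤ ‖A‖ * ‖x‖ * ‖x‖ := by
        have := A.le_opNorm x
        nlinarith [norm_nonneg x]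
    _ = ‖A‖ * ‖x‖ ^ 2 := by ring
  calc aNorm A x ≤ Real.sqrt (‖A‖ * ‖x‖ ^ 2) := Real.sqrt_le_sqrt h
  _ = Real.sqrt ‖A‖ * ‖x‖ := by
      rw [Real.sqrt_mul (norm_nonneg A), Real.sqrt_sq (norm_nonneg x)]

end helpers2

section helpers3

variable (A : H →L[ℂ] H)
set_option linter.unusedSectionVars false

lemma A_inj (hA' : ∀ x : H, x ≠ 0 → 0 < (⟪A x, x⟫_ℂ).re) {z : H} (hz : A z = 0) : z = 0 := by
  by_contra h
  have := hA' z h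
  rw [hz] at this
  simp at this

lemma mem_closure_range (hA' : ∀ x : H, x ≠ 0 → 0 < (⟪A x, x⟫_ℂ).re) (x : H) :
    x ∈ closure (Set.range (⇑A)) := by
  have hbot : (LinearMap.range (A : H →ₗ[ℂ] H))ᗮ = ⊥ := by
    rw [Submodule.eq_bot_iff]
    intro v hv
    by_contra h
    have h0 : ⟪A v, v⟫_ℂ = 0 := (Submodule.mem_orthogonal _ v).1 hv (A v) ⟨v, rfl⟩
    have := hA' v h
    rw [h0] at this
    simp at this
  have htop : (LinearMap.range (A : H →ₗ[ℂ] H)).topologicalClosure = ⊤ :=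
    Submodule.topologicalClosure_eq_top_iff.2 hbot
  have hset : Set.range (⇑A) = ↑(LinearMap.range (A : H →ₗ[ℂ] H)) := by
    ext y; simp [LinearMap.mem_range]
  rw [hset, ← Submodule.topologicalClosure_coe, htop]
  trivial

lemma abound (hA : A.IsPositive) (hA' : ∀ x : H, x ≠ 0 → 0 < (⟪A x, x⟫_ℂ).re)
    (X G : H →L[ℂ] H)
    (hXG : ∀ x : H, ⟪A (X x), X x⟫_ℂ = ⟪A x, G x⟫_ℂ)
    (hG : A ∘L G = adjoint G ∘L A) :
    ∀ x : H, aNorm A (X x) ≤ Real.sqrt (max ‖G‖ 1) * aNorm A x := by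
  set c : ℝ := max ‖G‖ 1 with hc
  have hc1 : (1 : ℝ) ≤ c := le_max_right _ _
  have hc0 : (0 : ℝ) < c := lt_of_lt_of_le one_pos hc1
  -- powers of G are also A-selfadjoint-intertwined
  have hG' : A * G = adjoint G * A := hG
  have hGpow : ∀ m : ℕ, A * G ^ m = adjoint (G ^ m) * A := by
    intro m
    induction m with
    | zero => rw [pow_zero, ← star_eq_adjoint]; simp
    | succ n ih =>
      calc A * G ^ (n + 1) = (A * G ^ n) * G := by rw [pow_succ, mul_assoc]
      _ = adjoint (G ^ n) * (A * G) := by rw [ih, mul_assoc]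
      _ = adjoint (G ^ n) * (adjoint G * A) := by rw [hG']
      _ = adjoint (G ^ (n + 1)) * A := by
          rw [← mul_assoc, ← star_eq_adjoint, ← star_eq_adjoint, ← star_eq_adjoint,
            ← star_mul, ← pow_succ']
  -- the doubling step
  have step : ∀ (m : ℕ) (x : H),
      aNorm A ((G ^ m) x) ^ 2 ≤ aNorm A x * aNorm A ((G ^ (2 * m)) x) := by
    intro m x
    have h1 : ⟪A ((G ^ m) x), (G ^ m) x⟫_ℂ = ⟪A x, (G ^ (2 * m)) x⟫_ℂ := by
      have : A ((G ^ m) x) = adjoint (G ^ m) (A x) := by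
        have := congrArg (fun (F : H →L[ℂ] H) => F x) (hGpow m)
        simpa [ContinuousLinearMap.mul_apply] using this
      rw [this, adjoint_inner_left]
      congr 1
      rw [two_mul, pow_add]
      rfl
    rw [aNorm_sq A hA, h1]
    calc (⟪A x, (G ^ (2 * m)) x⟫_ℂ).re ≤ ‖⟪A x, (G ^ (2 * m)) x⟫_ℂ‖ := Complex.re_le_norm _
    _ ≤ _ := innA_cs A hA _ _
  -- unit-vector iteration
  have iter : ∀ (x : H), aNorm A x = 1 → ∀ k : ℕ,
      aNorm A (G x) ^ (2 ^ k) ≤ aNorm A ((G ^ (2 ^ k)) x) := by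
    intro x hx k
    induction k with
    | zero => simp [pow_one]
    | succ n ih =>
      have h1 : aNorm A (G x) ^ 2 ^ (n + 1) = (aNorm A (G x) ^ 2 ^ n) ^ 2 := by
        rw [← pow_mul, pow_succ]
      rw [h1]
      calc (aNorm A (G x) ^ 2 ^ n) ^ 2 ≤ aNorm A ((G ^ (2 ^ n)) x) ^ 2 := by
            apply pow_le_pow_left₀ (pow_nonneg (aNorm_nonneg A _) _) ih
      _ ≤ aNorm A x * aNorm A ((G ^ (2 * 2 ^ n)) x) := step (2 ^ n) x
      _ = aNorm A ((G ^ (2 ^ (n + 1))) x) := by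
          rw [hx, one_mul, ← pow_succ']
  -- unit-vector bound
  have unit_bound : ∀ x : H, aNorm A x = 1 → aNorm A (G x) ≤ c := by
    intro x hx
    by_contra hgt
    push_neg at hgt
    set ρ : ℝ := aNorm A (G x) / c with hρ
    have hρ1 : 1 < ρ := (one_lt_div hc0).2 hgt
    obtain ⟨n, hn⟩ := pow_unbounded_of_one_lt (Real.sqrt ‖A‖ * ‖x‖) hρ1
    have hnn : ρ ^ n ≤ ρ ^ (2 ^ n) :=
      pow_le_pow_right₀ (le_of_lt hρ1) (le_of_lt (Nat.lt_two_pow_self (n := n)))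
    have hb : aNorm A (G x) ^ (2 ^ n) ≤ Real.sqrt ‖A‖ * (c ^ (2 ^ n) * ‖x‖) := by
      calc aNorm A (G x) ^ (2 ^ n) ≤ aNorm A ((G ^ (2 ^ n)) x) := iter x hx n
      _ ≤ Real.sqrt ‖A‖ * ‖(G ^ (2 ^ n)) x‖ := aNorm_le_norm A _
      _ ≤ Real.sqrt ‖A‖ * (c ^ (2 ^ n) * ‖x‖) := by
          apply mul_le_mul_of_nonneg_left _ (Real.sqrt_nonneg _)
          calc ‖(G ^ (2 ^ n)) x‖ ≤ ‖G ^ (2 ^ n)‖ * ‖x‖ := ContinuousLinearMap.le_opNorm _ _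
          _ ≤ ‖G‖ ^ (2 ^ n) * ‖x‖ := by
              apply mul_le_mul_of_nonneg_right (norm_pow_le' _ (pow_pos two_pos _)) (norm_nonneg _)
          _ ≤ c ^ (2 ^ n) * ‖x‖ := by
              apply mul_le_mul_of_nonneg_right _ (norm_nonneg _)
              exact pow_le_pow_left₀ (norm_nonneg _) (le_max_left _ _) _
    have hρpow : ρ ^ (2 ^ n) ≤ Real.sqrt ‖A‖ * ‖x‖ := by
      rw [hρ, div_pow, div_le_iff₀ (pow_pos hc0 _)] at *
      calc aNorm A (G x) ^ 2 ^ n ≤ Real.sqrt ‖A‖ * (c ^ (2 ^ n) * ‖x‖) := hb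
      _ = Real.sqrt ‖A‖ * ‖x‖ * c ^ 2 ^ n := by ring
    have := lt_of_lt_of_le hn (le_trans hnn hρpow)
    exact lt_irrefl _ this
  -- general bound for G
  have G_bound : ∀ x : H, aNorm A (G x) ≤ c * aNorm A x := by
    intro x
    by_cases hx : x = 0
    · simp [hx, aNorm_zero, map_zero]
    · have hpos := aNorm_pos A hA' hx
      set r : ℝ := aNorm A x
      set u : H := ((r : ℂ))⁻¹ • x with hu
      have hru : aNorm A u = 1 := by
        rw [hu, aNorm_smul, norm_inv, Complex.norm_real, Real.norm_eq_abs,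
          abs_of_pos hpos, inv_mul_cancel₀ (ne_of_gt hpos)]
      have hGu : aNorm A (G u) = r⁻¹ * aNorm A (G x) := by
        rw [hu, map_smul, aNorm_smul, norm_inv, Complex.norm_real, Real.norm_eq_abs,
          abs_of_pos hpos]
      have := unit_bound u hru
      rw [hGu] at this
      calc aNorm A (G x) = r * (r⁻¹ * aNorm A (G x)) := by
            field_simp
      _ ≤ r * c := by
            apply mul_le_mul_of_nonneg_left this (le_of_lt hpos)
      _ = c * r := mul_comm _ _
  -- conclude for X
  intro x
  have hX2 : aNorm A (X x) ^ 2 ≤ (Real.sqrt c * aNorm A x) ^ 2 := by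
    rw [mul_pow, Real.sq_sqrt (le_of_lt hc0)]
    calc aNorm A (X x) ^ 2 = (⟪A (X x), X x⟫_ℂ).re := aNorm_sq A hA _
    _ = (⟪A x, G x⟫_ℂ).re := by rw [hXG x]
    _ ≤ ‖⟪A x, G x⟫_ℂ‖ := Complex.re_le_norm _
    _ ≤ aNorm A x * aNorm A (G x) := innA_cs A hA _ _
    _ ≤ aNorm A x * (c * aNorm A x) := by
        apply mul_le_mul_of_nonneg_left (G_bound x) (aNorm_nonneg A x)
    _ = c * aNorm A x ^ 2 := by ring
  have := Real.sqrt_le_sqrt hX2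
  rwa [Real.sqrt_sq (aNorm_nonneg A _),
    Real.sqrt_sq (mul_nonneg (Real.sqrt_nonneg _) (aNorm_nonneg A _))] at this

end helpers3


theorem stmt18 (A T S R : H →L[ℂ] H) (hA : A.IsPositive) (hA' : ∀ x : H, x ≠ 0 → 0 < (⟪A x, x⟫_ℂ).re)
    (hS : A ∘L S = (ContinuousLinearMap.adjoint T) ∘L A)
    (hSr : Set.range (⇑S) ⊆ closure (Set.range (⇑A)))
    (hR : A ∘L R = (ContinuousLinearMap.adjoint S) ∘L A)
    (hRr : Set.range (⇑R) ⊆ closure (Set.range (⇑A))) :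
    aOpNorm A T / 2 +
        (aOpNorm A ((2 : ℂ)⁻¹ • (S + R)) - aOpNorm A ((2 * Complex.I)⁻¹ • (S - R))) / 2 ≤
      wA A T := by
  classical
  -- basic adjoint consequences
  have hS' : adjoint S ∘L A = A ∘L T := by
    have h := congrArg adjoint hS
    rwa [adjoint_comp, adjoint_comp, adjoint_adjoint, hA.isSelfAdjoint.adjoint_eq] at h
  have hASx : ∀ x : H, A (S x) = adjoint T (A x) := by
    intro x; exact congrArg (fun (F : H →L[ℂ] H) => F x) hS
  have hATx : ∀ x : H, A (T x) = adjoint S (A x) := by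
    intro x; exact (congrArg (fun (F : H →L[ℂ] H) => F x) hS').symm
  have hRT : R = T := by
    have h1 : A ∘L R = A ∘L T := by rw [hR, hS']
    ext x
    have h2 : A (R x) = A (T x) := congrArg (fun (F : H →L[ℂ] H) => F x) h1
    have h3 : A (R x - T x) = 0 := by rw [map_sub, h2, sub_self]
    have := A_inj A hA' h3
    exact sub_eq_zero.1 this
  rw [hRT]
  set P : H →L[ℂ] H := (2 : ℂ)⁻¹ • (S + T) with hPdef
  set Q : H →L[ℂ] H := (2 * Complex.I)⁻¹ • (S - T) with hQdef
  -- A-boundedness of T and S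
  set KT : ℝ := Real.sqrt (max ‖S ∘L T‖ 1) with hKT
  set KS : ℝ := Real.sqrt (max ‖T ∘L S‖ 1) with hKS
  have hTbd : ∀ x : H, aNorm A (T x) ≤ KT * aNorm A x := by
    apply abound A hA hA' T (S ∘L T)
    · intro x
      rw [hATx x, adjoint_inner_left]
      rfl
    · calc A ∘L (S ∘L T) = (A ∘L S) ∘L T := by rw [ContinuousLinearMap.comp_assoc]
      _ = (adjoint T ∘L A) ∘L T := by rw [hS]
      _ = adjoint T ∘L (A ∘L T) := by rw [ContinuousLinearMap.comp_assoc]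
      _ = adjoint T ∘L (adjoint S ∘L A) := by rw [hS']
      _ = adjoint (S ∘L T) ∘L A := by
          rw [adjoint_comp, ContinuousLinearMap.comp_assoc]
  have hSbd : ∀ x : H, aNorm A (S x) ≤ KS * aNorm A x := by
    apply abound A hA hA' S (T ∘L S)
    · intro x
      rw [hASx x, adjoint_inner_left]
      rfl
    · calc A ∘L (T ∘L S) = (A ∘L T) ∘L S := by rw [ContinuousLinearMap.comp_assoc]
      _ = (adjoint S ∘L A) ∘L S := by rw [hS']
      _ = adjoint S ∘L (A ∘L S) := by rw [ContinuousLinearMap.comp_assoc]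
      _ = adjoint S ∘L (adjoint T ∘L A) := by rw [hS]
      _ = adjoint (T ∘L S) ∘L A := by
          rw [adjoint_comp, ContinuousLinearMap.comp_assoc]
  -- scalar identities for S, P
  have hST : ∀ x : H, ⟪A (S x), x⟫_ℂ = (starRingEnd ℂ) ⟪A (T x), x⟫_ℂ := by
    intro x
    rw [hASx x, adjoint_inner_left, innA_conj A hA (T x) x]
  have hPre : ∀ x : H, ⟪A (P x), x⟫_ℂ = ((⟪A (T x), x⟫_ℂ).re : ℂ) := by
    intro x
    have h1 : ⟪A (P x), x⟫_ℂ = (2 : ℂ)⁻¹ * (⟪A (S x), x⟫_ℂ + ⟪A (T x), x⟫_ℂ) := by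
      simp only [hPdef, ContinuousLinearMap.smul_apply, ContinuousLinearMap.add_apply,
        map_smul, map_add, inner_smul_left, inner_add_left, map_inv₀, Complex.conj_ofNat]
      try ring
    rw [h1, hST x]
    set z := ⟪A (T x), x⟫_ℂ
    have : (starRingEnd ℂ) z + z = 2 * (z.re : ℂ) := by
      rw [add_comm, Complex.add_conj]
      push_cast
      ring
    rw [this]
    ring
  -- A∘P is selfadjoint-like
  have hAPu : ∀ v u : H, ⟪A (P v), u⟫_ℂ = ⟪A v, P u⟫_ℂ := by
    intro v u
    have h1 : ⟪A (S v), u⟫_ℂ = ⟪A v, T u⟫_ℂ := by rw [hASx v, adjoint_inner_left]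
    have h2 : ⟪A (T v), u⟫_ℂ = ⟪A v, S u⟫_ℂ := by rw [hATx v, adjoint_inner_left]
    simp only [hPdef, ContinuousLinearMap.smul_apply, ContinuousLinearMap.add_apply,
      map_smul, map_add, inner_smul_left, inner_smul_right, inner_add_left, inner_add_right,
      map_inv₀, Complex.conj_ofNat, h1, h2]
    ring
  have hconjP : ∀ u v : H, (starRingEnd ℂ) ⟪A (P u), v⟫_ℂ = ⟪A (P v), u⟫_ℂ := by
    intro u v
    rw [innA_conj A hA (P u) v, hAPu v u]
  -- trivial/nontrivial case split
  by_cases hH : ∃ x₀ : H, x₀ ≠ 0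
  swap
  · push_neg at hH
    have he1 : {r : ℝ | ∃ x : H, aNorm A x = 1 ∧ r = ‖⟪A (T x), x⟫_ℂ‖} = ∅ := by
      ext r
      simp only [Set.mem_setOf_eq, Set.mem_empty_iff_false, iff_false]
      rintro ⟨x, hx, -⟩
      rw [hH x, aNorm_zero] at hx
      norm_num at hx
    have he2 : ∀ U : H →L[ℂ] H,
        {r : ℝ | ∃ x : H, x ∈ closure (Set.range (⇑A)) ∧ aNorm A x = 1 ∧ r = aNorm A (U x)}
          = ∅ := by
      intro U
      ext r
      simp only [Set.mem_setOf_eq, Set.mem_empty_iff_false, iff_false]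
      rintro ⟨x, -, hx, -⟩
      rw [hH x, aNorm_zero] at hx
      norm_num at hx
    show aOpNorm A T / 2 + (aOpNorm A P - aOpNorm A Q) / 2 ≤ wA A T
    rw [wA, aOpNorm, aOpNorm, aOpNorm, he1, he2, he2, he2, Real.sSup_empty]
    norm_num
  obtain ⟨x₀, hx₀⟩ := hH
  set u₀ : H := ((aNorm A x₀ : ℂ))⁻¹ • x₀ with hu₀def
  have hx₀pos := aNorm_pos A hA' hx₀
  have hu₀ : aNorm A u₀ = 1 := by
    rw [hu₀def, aNorm_smul, norm_inv, Complex.norm_real, Real.norm_eq_abs,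
      abs_of_pos hx₀pos, inv_mul_cancel₀ (ne_of_gt hx₀pos)]
  set w := wA A T with hwdef
  set SwSet := {r : ℝ | ∃ x : H, aNorm A x = 1 ∧ r = ‖⟪A (T x), x⟫_ℂ‖} with hSw
  have hwsup : w = sSup SwSet := rfl
  have hSwBdd : BddAbove SwSet := by
    refine ⟨KT, ?_⟩
    rintro r ⟨x, hx, rfl⟩
    calc ‖⟪A (T x), x⟫_ℂ‖ ≤ aNorm A (T x) * aNorm A x := innA_cs A hA _ _
    _ ≤ KT * aNorm A x * aNorm A x := by
        apply mul_le_mul_of_nonneg_right (hTbd x) (aNorm_nonneg A x)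
    _ = KT := by rw [hx]; ring
  have hwmem : ∀ x : H, aNorm A x = 1 → ‖⟪A (T x), x⟫_ℂ‖ ≤ w :=
    fun x hx => le_csSup hSwBdd ⟨x, hx, rfl⟩
  have hw0 : 0 ≤ w := le_trans (norm_nonneg _) (hwmem u₀ hu₀)
  -- scaled numerical-radius bound
  have hwUB : ∀ z : H, ‖⟪A (T z), z⟫_ℂ‖ ≤ w * aNorm A z ^ 2 := by
    intro z
    by_cases hz : z = 0
    · rw [hz]
      have h0 : ‖⟪A (T 0), (0 : H)⟫_ℂ‖ = 0 := by simp
      rw [h0, aNorm_zero]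
      norm_num
    · have hzpos := aNorm_pos A hA' hz
      set r : ℝ := aNorm A z with hr
      set u : H := ((r : ℂ))⁻¹ • z with hu
      have hu1 : aNorm A u = 1 := by
        rw [hu, aNorm_smul, norm_inv, Complex.norm_real, Real.norm_eq_abs,
          abs_of_pos hzpos, inv_mul_cancel₀ (ne_of_gt hzpos)]
      have hzu : z = (r : ℂ) • u := by
        rw [hu, smul_smul, mul_inv_cancel₀ (by exact_mod_cast ne_of_gt hzpos), one_smul]
      have hscale : ⟪A (T z), z⟫_ℂ = (r : ℂ) ^ 2 * ⟪A (T u), u⟫_ℂ := by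
        conv_lhs => rw [hzu]
        rw [map_smul, map_smul, inner_smul_left, inner_smul_right, Complex.conj_ofReal]
        ring
      rw [hscale]
      rw [norm_mul]
      have : ‖((r : ℂ)) ^ 2‖ = r ^ 2 := by
        rw [norm_pow, Complex.norm_real, Real.norm_eq_abs, abs_of_pos hzpos]
      rw [this]
      calc r ^ 2 * ‖⟪A (T u), u⟫_ℂ‖ ≤ r ^ 2 * w := by
            apply mul_le_mul_of_nonneg_left (hwmem u hu1) (sq_nonneg r)
      _ = w * aNorm A z ^ 2 := by rw [← hr]; ring
  have hPzz : ∀ z : H, |(⟪A (P z), z⟫_ℂ).re| ≤ w * aNorm A z ^ 2 := by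
    intro z
    rw [hPre z]
    calc |((((⟪A (T z), z⟫_ℂ).re : ℝ) : ℂ)).re| = |(⟪A (T z), z⟫_ℂ).re| := by
          rw [Complex.ofReal_re]
    _ ≤ ‖⟪A (T z), z⟫_ℂ‖ := Complex.abs_re_le_norm _
    _ ≤ w * aNorm A z ^ 2 := hwUB z
  -- polarization inequality
  have hpolar : ∀ u v : H,
      (⟪A (P u), v⟫_ℂ).re ≤ w * (aNorm A u ^ 2 + aNorm A v ^ 2) / 2 := by
    intro u v
    have hexp : ⟪A (P (u + v)), u + v⟫_ℂ - ⟪A (P (u - v)), u - v⟫_ℂ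
        = 2 * (⟪A (P u), v⟫_ℂ + ⟪A (P v), u⟫_ℂ) := by
      simp only [map_add, map_sub, inner_add_left, inner_add_right, inner_sub_left,
        inner_sub_right]
      ring
    have hsum : ⟪A (P u), v⟫_ℂ + ⟪A (P v), u⟫_ℂ
        = 2 * ((⟪A (P u), v⟫_ℂ).re : ℂ) := by
      rw [← hconjP u v, Complex.add_conj]
      push_cast
      ring
    have hre : 4 * (⟪A (P u), v⟫_ℂ).re
        = (⟪A (P (u + v)), u + v⟫_ℂ).re - (⟪A (P (u - v)), u - v⟫_ℂ).re := by
      have h3 := congrArg Complex.re (hexp.trans (by rw [hsum]))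
      simp only [Complex.sub_re] at h3
      have h4 : (2 * (2 * ((⟪A (P u), v⟫_ℂ).re : ℂ))) = ((4 * (⟪A (P u), v⟫_ℂ).re : ℝ) : ℂ) := by
        push_cast
        ring
      rw [h4, Complex.ofReal_re] at h3
      linarith
    have hpar : aNorm A (u + v) ^ 2 + aNorm A (u - v) ^ 2
        = 2 * aNorm A u ^ 2 + 2 * aNorm A v ^ 2 := by
      rw [aNorm_sq A hA, aNorm_sq A hA, aNorm_sq A hA, aNorm_sq A hA]
      have hvu : (⟪A v, u⟫_ℂ).re = (⟪A u, v⟫_ℂ).re := by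
        rw [← innA_conj A hA u v, Complex.conj_re]
      simp only [map_add, map_sub, inner_add_left, inner_add_right, inner_sub_left,
        inner_sub_right, Complex.add_re, Complex.sub_re, hvu]
      ring
    have h1 : (⟪A (P (u + v)), u + v⟫_ℂ).re ≤ w * aNorm A (u + v) ^ 2 :=
      le_trans (le_abs_self _) (hPzz (u + v))
    have h2 : -(⟪A (P (u - v)), u - v⟫_ℂ).re ≤ w * aNorm A (u - v) ^ 2 :=
      le_trans (neg_le_abs _) (hPzz (u - v))
    nlinarith [hre, hpar, h1, h2]
  -- key inequality: ‖P x‖_A ≤ w for unit x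
  have hPw : ∀ x : H, aNorm A x = 1 → aNorm A (P x) ≤ w := by
    intro x hx
    by_cases hP0 : aNorm A (P x) = 0
    · rw [hP0]; exact hw0
    · have hPpos : 0 < aNorm A (P x) :=
        lt_of_le_of_ne (aNorm_nonneg A _) (Ne.symm hP0)
      set r : ℝ := aNorm A (P x) with hrdef
      set v : H := ((r : ℂ))⁻¹ • P x with hv
      have hv1 : aNorm A v = 1 := by
        rw [hv, aNorm_smul, norm_inv, Complex.norm_real, Real.norm_eq_abs,
          abs_of_pos hPpos, inv_mul_cancel₀ (ne_of_gt hPpos)]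
      have hrePx : (⟪A (P x), P x⟫_ℂ).re = r ^ 2 := (aNorm_sq A hA (P x)).symm
      have hcalc : (⟪A (P x), v⟫_ℂ).re = r := by
        rw [hv, inner_smul_right]
        have : (((r : ℂ))⁻¹ * ⟪A (P x), P x⟫_ℂ).re = r⁻¹ * (⟪A (P x), P x⟫_ℂ).re := by
          rw [← Complex.ofReal_inv, Complex.re_ofReal_mul]
        rw [this, hrePx]
        field_simp
      have := hpolar x v
      rw [hcalc, hx, hv1] at this
      calc r ≤ w * (1 ^ 2 + 1 ^ 2) / 2 := this
      _ = w := by ring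
  -- pointwise bound for Q
  have h2I : ((2 : ℂ) * Complex.I)⁻¹ = -(2 : ℂ)⁻¹ * Complex.I := by
    rw [mul_inv, Complex.inv_I]
    ring
  have hQptw : ∀ x : H, aNorm A (Q x) ≤ (KS + KT) / 2 * aNorm A x := by
    intro x
    have hQx : Q x = ((2 : ℂ) * Complex.I)⁻¹ • (S x - T x) := rfl
    rw [hQx, aNorm_smul]
    have hnrm : ‖((2 : ℂ) * Complex.I)⁻¹‖ = 1 / 2 := by
      rw [norm_inv, norm_mul, Complex.norm_I]
      norm_num
    rw [hnrm]
    have hsub : aNorm A (S x - T x) ≤ aNorm A (S x) + aNorm A (T x) := by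
      have : S x - T x = S x + (-1 : ℂ) • T x := by
        rw [neg_one_smul]; abel
      rw [this]
      calc aNorm A (S x + (-1 : ℂ) • T x)
          ≤ aNorm A (S x) + aNorm A ((-1 : ℂ) • T x) := aNorm_add A hA _ _
      _ = aNorm A (S x) + aNorm A (T x) := by rw [aNorm_smul]; norm_num
    calc 1 / 2 * aNorm A (S x - T x) ≤ 1 / 2 * (aNorm A (S x) + aNorm A (T x)) := by
          linarith
    _ ≤ 1 / 2 * (KS * aNorm A x + KT * aNorm A x) := by
          have := hSbd x; have := hTbd x; linarith
    _ = (KS + KT) / 2 * aNorm A x := by ring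
  -- pointwise triangle: T = P - i Q
  have hTPQ : ∀ x : H, aNorm A (T x) ≤ aNorm A (P x) + aNorm A (Q x) := by
    intro x
    have hc : -Complex.I * (-(2 : ℂ)⁻¹ * Complex.I) = -(2 : ℂ)⁻¹ := by
      have hI : Complex.I * Complex.I = -1 := Complex.I_mul_I
      calc -Complex.I * (-(2 : ℂ)⁻¹ * Complex.I)
          = (2 : ℂ)⁻¹ * (Complex.I * Complex.I) := by ring
      _ = -(2 : ℂ)⁻¹ := by rw [hI]; ring
    have hTx : T x = P x + (-Complex.I) • Q x := by
      have hQx : Q x = ((2 : ℂ) * Complex.I)⁻¹ • (S x - T x) := rfl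
      have hPx : P x = (2 : ℂ)⁻¹ • (S x + T x) := rfl
      rw [hPx, hQx, h2I, smul_smul, hc]
      module
    calc aNorm A (T x) = aNorm A (P x + (-Complex.I) • Q x) := by rw [← hTx]
    _ ≤ aNorm A (P x) + aNorm A ((-Complex.I) • Q x) := aNorm_add A hA _ _
    _ = aNorm A (P x) + aNorm A (Q x) := by
        rw [aNorm_smul]
        simp [Complex.norm_I]
  -- assemble the sSup inequalities
  set SqSet := {r : ℝ | ∃ x : H, x ∈ closure (Set.range (⇑A)) ∧ aNorm A x = 1 ∧
    r = aNorm A (Q x)} with hSq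
  have hSqBdd : BddAbove SqSet := by
    refine ⟨(KS + KT) / 2, ?_⟩
    rintro r ⟨x, -, hx, rfl⟩
    calc aNorm A (Q x) ≤ (KS + KT) / 2 * aNorm A x := hQptw x
    _ = (KS + KT) / 2 := by rw [hx, mul_one]
  have hq : aOpNorm A Q = sSup SqSet := rfl
  have hqmem : ∀ x : H, aNorm A x = 1 → aNorm A (Q x) ≤ aOpNorm A Q := by
    intro x hx
    rw [hq]
    exact le_csSup hSqBdd ⟨x, mem_closure_range A hA' x, hx, rfl⟩
  have hpw : aOpNorm A P ≤ w := by
    apply csSup_le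
    · exact ⟨aNorm A (P u₀), u₀, mem_closure_range A hA' u₀, hu₀, rfl⟩
    · rintro r ⟨x, -, hx, rfl⟩
      exact hPw x hx
  have haw : aOpNorm A T ≤ w + aOpNorm A Q := by
    apply csSup_le
    · exact ⟨aNorm A (T u₀), u₀, mem_closure_range A hA' u₀, hu₀, rfl⟩
    · rintro r ⟨x, -, hx, rfl⟩
      calc aNorm A (T x) ≤ aNorm A (P x) + aNorm A (Q x) := hTPQ x
      _ ≤ w + aOpNorm A Q := add_le_add (hPw x hx) (hqmem x hx)
  show aOpNorm A T / 2 + (aOpNorm A P - aOpNorm A Q) / 2 ≤ w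
  linarith [haw, hpw]
end

section
/- Let A be strictly positive and let T1, T2 be bounded linear operators on H each admitting an A-adjoint (i.e. for each i there exists S_i with A∘S_i = T_i*∘A). Then w_B([[0,T1],[T2,0]]) + (‖T1‖_A + ‖T2‖_A)/2 + (1/2)·|w_A(T1+T2) - (‖T1‖_A + ‖T2‖_A)/2| + (1/2)·|w_A(T1-T2) - (‖T1‖_A + ‖T2‖_A)/2| ≤ 2·(w_A(T1) + w_A(T2)). -/
open scoped InnerProductSpace
open ContinuousLinearMap

variable {H : Type*} [NormedAddCommGroup H] [InnerProductSpace ℂ H] [CompleteSpace H]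

lemma myhsa (A : H →L[ℂ] H) (hA : A.IsPositive) (u v : H) : ⟪A u, v⟫_ℂ = ⟪u, A v⟫_ℂ := by
  conv_lhs => rw [← hA.isSelfAdjoint.adjoint_eq]
  exact adjoint_inner_left A v u

lemma myPnn (A : H →L[ℂ] H) (hA : A.IsPositive) (u : H) : 0 ≤ (⟪A u, u⟫_ℂ).re := hA.2 u

lemma myaNorm_nonneg (A : H →L[ℂ] H) (x : H) : 0 ≤ aNorm A x := by
  unfold aNorm; exact Real.sqrt_nonneg _

/-- Cauchy–Schwarz squared for the semi-inner product. -/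
lemma myCS2 (A : H →L[ℂ] H) (hA : A.IsPositive) (u v : H) :
    ‖⟪A u, v⟫_ℂ‖ ^ 2 ≤ (⟪A u, u⟫_ℂ).re * (⟪A v, v⟫_ℂ).re := by
  set z := ⟪A u, v⟫_ℂ with hz
  set a := (⟪A u, u⟫_ℂ).re with ha
  set b := (⟪A v, v⟫_ℂ).re with hb
  obtain ⟨c, hc1, hc2⟩ : ∃ c : ℂ, ‖c‖ = 1 ∧ c * z = (‖z‖ : ℂ) := by
    rcases eq_or_ne z 0 with h | h
    · exact ⟨1, by simp [h]⟩
    · refine ⟨(‖z‖ : ℂ) / z, ?_, by field_simp⟩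
      rw [norm_div, Complex.norm_real, norm_norm, div_self (norm_ne_zero_iff.mpr h)]
  have hcc : (starRingEnd ℂ) c * c = 1 := by
    rw [mul_comm, Complex.mul_conj']
    norm_cast
    rw [hc1]; norm_num
  have key : ∀ t : ℝ, 0 ≤ a * (t * t) + (2 * ‖z‖) * t + b := by
    intro t
    have h0 := hA.2 ((t : ℂ) • u + c • v)
    rw [ContinuousLinearMap.reApplyInnerSelf_apply] at h0
    have hvu : ⟪A v, u⟫_ℂ = (starRingEnd ℂ) z := by
      rw [hz, ← inner_conj_symm, myhsa A hA u v]
    have hexp : ⟪A ((t : ℂ) • u + c • v), (t : ℂ) • u + c • v⟫_ℂ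
        = (t : ℂ) * t * ⟪A u, u⟫_ℂ + t * (c * z) + t * (starRingEnd ℂ) (c * z)
          + ⟪A v, v⟫_ℂ := by
      simp only [map_add, map_smul, inner_add_left, inner_add_right, inner_smul_left,
        inner_smul_right, hvu]
      simp only [Complex.conj_ofReal, map_mul]
      linear_combination (⟪A v, v⟫_ℂ) * hcc
    rw [hexp, hc2] at h0
    simp only [RCLike.re_to_complex, Complex.add_re, Complex.mul_re, Complex.mul_im, Complex.conj_ofReal, Complex.ofReal_re,
      Complex.ofReal_im] at h0
    rw [← ha, ← hb] at h0
    nlinarith [h0]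
  have hd := discrim_le_zero key
  rw [discrim] at hd
  nlinarith [hd]

lemma myCS (A : H →L[ℂ] H) (hA : A.IsPositive) (u v : H) :
    ‖⟪A u, v⟫_ℂ‖ ≤ aNorm A u * aNorm A v := by
  have h := myCS2 A hA u v
  have h1 : ‖⟪A u, v⟫_ℂ‖ = Real.sqrt (‖⟪A u, v⟫_ℂ‖ ^ 2) := by
    rw [Real.sqrt_sq (norm_nonneg _)]
  rw [h1, aNorm, aNorm, ← Real.sqrt_mul (myPnn A hA u)]
  exact Real.sqrt_le_sqrt h

lemma myaNorm_sq (A : H →L[ℂ] H) (hA : A.IsPositive) (u : H) :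
    aNorm A u ^ 2 = (⟪A u, u⟫_ℂ).re := Real.sq_sqrt (hA.2 u)

lemma mypnorm (A : H →L[ℂ] H) (hA : A.IsPositive) (w : H) :
    aNorm A w ≤ Real.sqrt ‖A‖ * ‖w‖ := by
  have h : (⟪A w, w⟫_ℂ).re ≤ ‖A‖ * ‖w‖ ^ 2 := by
    calc (⟪A w, w⟫_ℂ).re ≤ ‖⟪A w, w⟫_ℂ‖ := Complex.re_le_norm _
    _ ≤ ‖A w‖ * ‖w‖ := norm_inner_le_norm _ _
    _ ≤ ‖A‖ * ‖w‖ * ‖w‖ := by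
        have := A.le_opNorm w
        nlinarith [norm_nonneg w, norm_nonneg (A w)]
    _ = ‖A‖ * ‖w‖ ^ 2 := by ring
  calc aNorm A w = Real.sqrt (⟪A w, w⟫_ℂ).re := rfl
  _ ≤ Real.sqrt (‖A‖ * ‖w‖ ^ 2) := Real.sqrt_le_sqrt h
  _ = Real.sqrt ‖A‖ * ‖w‖ := by
      rw [Real.sqrt_mul (norm_nonneg A), Real.sqrt_sq (norm_nonneg w)]

/-- key pointwise bound from existence of an A-adjoint -/
lemma myexists_bound (A T : H →L[ℂ] H) (hA : A.IsPositive)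
    (h : ∃ S : H →L[ℂ] H, A ∘L S = (ContinuousLinearMap.adjoint T) ∘L A) :
    ∃ C : ℝ, 0 ≤ C ∧ ∀ x : H, ‖⟪A (T x), x⟫_ℂ‖ ≤ C * (⟪A x, x⟫_ℂ).re := by
  obtain ⟨S, hS⟩ := h
  set R := S ∘L T with hR
  have hAS : ∀ w v : H, ⟪A (S w), v⟫_ℂ = ⟪A w, T v⟫_ℂ := by
    intro w v
    have h1 : (A ∘L S) w = ((ContinuousLinearMap.adjoint T) ∘L A) w := by rw [hS]
    simp only [ContinuousLinearMap.comp_apply] at h1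
    rw [h1, adjoint_inner_left]
  have hAS' : ∀ u w : H, ⟪A u, S w⟫_ℂ = ⟪A (T u), w⟫_ℂ := by
    intro u w
    rw [myhsa A hA u (S w)]
    have h1 : A (S w) = (ContinuousLinearMap.adjoint T) (A w) := by
      have := congrArg (fun M : H →L[ℂ] H => M w) hS
      simpa using this
    rw [h1, adjoint_inner_right, myhsa A hA (T u) w]
  have hkey : ∀ u v : H, ⟪A (R u), v⟫_ℂ = ⟪A u, R v⟫_ℂ := by
    intro u v
    have h1 : ⟪A (R u), v⟫_ℂ = ⟪A (T u), T v⟫_ℂ := hAS (T u) v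
    have h2 : ⟪A u, R v⟫_ℂ = ⟪A (T u), T v⟫_ℂ := hAS' u (T v)
    rw [h1, h2]
  have hTT : ∀ x : H, ⟪A (T x), T x⟫_ℂ = ⟪A x, R x⟫_ℂ := fun x => (hAS' x (T x)).symm
  -- step 1 : aNorm A (R x) ≤ ‖R‖ * aNorm A x
  have hRp : ∀ x : H, aNorm A (R x) ≤ ‖R‖ * aNorm A x := by
    intro x
    by_contra hcon
    push_neg at hcon
    set a : ℕ → ℝ := fun n => aNorm A ((R ^ n) x) with hadef
    have ha0 : a 0 = aNorm A x := by simp [hadef]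
    have ha1 : a 1 = aNorm A (R x) := by simp [hadef]
    have hannn : ∀ n, 0 ≤ a n := fun n => myaNorm_nonneg A _
    have hlog : ∀ n : ℕ, a (n+1) ^ 2 ≤ a (n+2) * a n := by
      intro n
      have e1 : (R ^ (n+1)) x = R ((R ^ n) x) := by
        rw [pow_succ']; rfl
      have e2 : (R ^ (n+2)) x = R ((R ^ (n+1)) x) := by
        rw [pow_succ']; rfl
      have h1 : ⟪A ((R ^ (n+1)) x), (R ^ (n+1)) x⟫_ℂ
          = ⟪A ((R ^ n) x), (R ^ (n+2)) x⟫_ℂ := by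
        calc ⟪A ((R ^ (n+1)) x), (R ^ (n+1)) x⟫_ℂ
            = ⟪A (R ((R ^ n) x)), (R ^ (n+1)) x⟫_ℂ := by
              exact congrArg (fun w => ⟪A w, (R ^ (n+1)) x⟫_ℂ) e1
          _ = ⟪A ((R ^ n) x), R ((R ^ (n+1)) x)⟫_ℂ := hkey _ _
          _ = ⟪A ((R ^ n) x), (R ^ (n+2)) x⟫_ℂ := by
              exact congrArg (fun w => ⟪A ((R ^ n) x), w⟫_ℂ) e2.symm
      have h2 : a (n+1) ^ 2 = (⟪A ((R ^ (n+1)) x), (R ^ (n+1)) x⟫_ℂ).re :=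
        myaNorm_sq A hA _
      rw [h2, h1]
      calc (⟪A ((R ^ n) x), (R ^ (n+2)) x⟫_ℂ).re
          ≤ ‖⟪A ((R ^ n) x), (R ^ (n+2)) x⟫_ℂ‖ := Complex.re_le_norm _
        _ ≤ aNorm A ((R ^ n) x) * aNorm A ((R ^ (n+2)) x) := myCS A hA _ _
        _ = a (n+2) * a n := by rw [mul_comm]
    have hiter : ∀ n : ℕ, ‖(R ^ n) x‖ ≤ ‖R‖ ^ n * ‖x‖ := by
      intro n
      induction n with
      | zero => simp
      | succ n ih =>
        have e1 : (R ^ (n+1)) x = R ((R ^ n) x) := by rw [pow_succ']; rfl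
        rw [e1]
        calc ‖R ((R ^ n) x)‖ ≤ ‖R‖ * ‖(R ^ n) x‖ := R.le_opNorm _
          _ ≤ ‖R‖ * (‖R‖ ^ n * ‖x‖) := mul_le_mul_of_nonneg_left ih (norm_nonneg R)
          _ = ‖R‖ ^ (n+1) * ‖x‖ := by ring
    have hup : ∀ n : ℕ, a n ≤ Real.sqrt ‖A‖ * ‖x‖ * ‖R‖ ^ n := by
      intro n
      calc a n ≤ Real.sqrt ‖A‖ * ‖(R ^ n) x‖ := mypnorm A hA _
        _ ≤ Real.sqrt ‖A‖ * (‖R‖ ^ n * ‖x‖) :=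
            mul_le_mul_of_nonneg_left (hiter n) (Real.sqrt_nonneg _)
        _ = Real.sqrt ‖A‖ * ‖x‖ * ‖R‖ ^ n := by ring
    -- positivity facts
    have ha1pos : 0 < a 1 := by
      rw [ha1]
      calc (0:ℝ) ≤ ‖R‖ * aNorm A x := mul_nonneg (norm_nonneg R) (myaNorm_nonneg A x)
        _ < aNorm A (R x) := hcon
    have hRpos : 0 < ‖R‖ := by
      rcases eq_or_lt_of_le (norm_nonneg R) with h0 | h0
      · exfalso
        have hR0 : R = 0 := by
          rw [← norm_eq_zero]; exact h0.symm
        have : a 1 = 0 := by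
          rw [ha1, hR0]
          simp [aNorm]
        linarith
      · exact h0
    have ha0pos : 0 < a 0 := by
      rcases eq_or_lt_of_le (hannn 0) with h0 | h0
      · exfalso
        have h1 := hlog 0
        have h2 : a 1 ^ 2 ≤ a 2 * 0 := by rw [h0]; exact h1
        nlinarith [hannn 2]
      · exact h0
    -- geometric growth: a n * (a 0)^n ≥ a 0 * (a 1)^n
    have hgrow : ∀ n : ℕ, 0 < a n ∧ a 1 * a n ≤ a (n+1) * a 0 := by
      intro n
      induction n with
      | zero => exact ⟨ha0pos, le_of_eq (by ring)⟩
      | succ n ih =>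
        obtain ⟨ihpos, ihle⟩ := ih
        have hsucc : 0 < a (n+1) := by
          have : 0 < a 1 * a n := mul_pos ha1pos ihpos
          nlinarith [hannn (n+1)]
        refine ⟨hsucc, ?_⟩
        have h1 := hlog n
        -- a1 * a(n+1) * a0 ≤ a(n+2) * a0 * a0 ?
        -- from a(n+1)^2 ≤ a(n+2) a n and a1 a n ≤ a(n+1) a0:
        nlinarith [h1, ihle, hsucc, ha0pos, ha1pos, hannn (n+2), ihpos]
    have hpow : ∀ n : ℕ, a 0 * a 1 ^ n ≤ a n * a 0 ^ n := by
      intro n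
      induction n with
      | zero => simp
      | succ n ih =>
        have h1 := (hgrow n).2
        have h2 := (hgrow n).1
        have h3 := (hgrow (n+1)).1
        have hp : (0:ℝ) ≤ a 0 ^ n := pow_nonneg (le_of_lt ha0pos) n
        have hp1 : (0:ℝ) ≤ a 1 ^ n := pow_nonneg (le_of_lt ha1pos) n
        calc a 0 * a 1 ^ (n+1) = a 1 * (a 0 * a 1 ^ n) := by ring
          _ ≤ a 1 * (a n * a 0 ^ n) := by nlinarith [ha1pos]
          _ = (a 1 * a n) * a 0 ^ n := by ring
          _ ≤ (a (n+1) * a 0) * a 0 ^ n := by nlinarith [h1]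
          _ = a (n+1) * a 0 ^ (n+1) := by ring
    -- contradiction: a 0 * a1^n ≤ M * (‖R‖ * a0)^n  where a1 > ‖R‖ a0 > 0
    set M := Real.sqrt ‖A‖ * ‖x‖ with hM
    have hfin : ∀ n : ℕ, a 0 * a 1 ^ n ≤ M * (‖R‖ * a 0) ^ n := by
      intro n
      calc a 0 * a 1 ^ n ≤ a n * a 0 ^ n := hpow n
        _ ≤ (M * ‖R‖ ^ n) * a 0 ^ n := by
            have := hup n
            nlinarith [pow_nonneg (le_of_lt ha0pos) n]
        _ = M * (‖R‖ * a 0) ^ n := by rw [mul_pow]; ring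
    have hd : 0 < ‖R‖ * a 0 := mul_pos hRpos ha0pos
    have hratio : 1 < a 1 / (‖R‖ * a 0) := by
      rw [lt_div_iff₀ hd]
      rw [ha1, ha0] at *
      linarith [hcon]
    obtain ⟨n, hn⟩ := pow_unbounded_of_one_lt (M / a 0) hratio
    have hfn := hfin n
    have hdn : 0 < (‖R‖ * a 0) ^ n := pow_pos hd n
    have hlt := mul_lt_mul_of_pos_right hn (mul_pos ha0pos hdn)
    have e1 : M / a 0 * (a 0 * (‖R‖ * a 0) ^ n) = M * (‖R‖ * a 0) ^ n := by
      field_simp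
    have e2 : (a 1 / (‖R‖ * a 0)) ^ n * (a 0 * (‖R‖ * a 0) ^ n) = a 0 * a 1 ^ n := by
      rw [div_pow]
      field_simp
    rw [e1, e2] at hlt
    linarith [hfin n, hlt]
  -- step 2: conclude
  refine ⟨Real.sqrt ‖R‖, Real.sqrt_nonneg _, fun x => ?_⟩
  have h1 : ‖⟪A (T x), x⟫_ℂ‖ ≤ aNorm A (T x) * aNorm A x := myCS A hA _ _
  have h2 : aNorm A (T x) ^ 2 ≤ aNorm A x * (‖R‖ * aNorm A x) := by
    rw [myaNorm_sq A hA, hTT x]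
    calc (⟪A x, R x⟫_ℂ).re ≤ ‖⟪A x, R x⟫_ℂ‖ := Complex.re_le_norm _
      _ ≤ aNorm A x * aNorm A (R x) := myCS A hA _ _
      _ ≤ aNorm A x * (‖R‖ * aNorm A x) :=
          mul_le_mul_of_nonneg_left (hRp x) (myaNorm_nonneg A x)
  have h3 : aNorm A (T x) ≤ Real.sqrt ‖R‖ * aNorm A x := by
    have h4 : aNorm A (T x) ^ 2 ≤ (Real.sqrt ‖R‖ * aNorm A x) ^ 2 := by
      rw [mul_pow, Real.sq_sqrt (norm_nonneg R)]
      nlinarith [h2]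
    have h5 : 0 ≤ Real.sqrt ‖R‖ * aNorm A x :=
      mul_nonneg (Real.sqrt_nonneg _) (myaNorm_nonneg A x)
    nlinarith [myaNorm_nonneg A (T x), h4, h5]
  calc ‖⟪A (T x), x⟫_ℂ‖ ≤ aNorm A (T x) * aNorm A x := h1
    _ ≤ (Real.sqrt ‖R‖ * aNorm A x) * aNorm A x :=
        mul_le_mul_of_nonneg_right h3 (myaNorm_nonneg A x)
    _ = Real.sqrt ‖R‖ * (⟪A x, x⟫_ℂ).re := by
        rw [mul_assoc, ← sq, myaNorm_sq A hA]



lemma mywA_nonneg (A T : H →L[ℂ] H) : 0 ≤ wA A T := by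
  apply Real.sSup_nonneg
  rintro r ⟨x, hx, rfl⟩
  positivity

lemma mybdd (A T : H →L[ℂ] H) (C : ℝ)
    (hpt : ∀ x : H, ‖⟪A (T x), x⟫_ℂ‖ ≤ C * (⟪A x, x⟫_ℂ).re) :
    BddAbove {r : ℝ | ∃ x : H, aNorm A x = 1 ∧ r = ‖⟪A (T x), x⟫_ℂ‖} := by
  refine ⟨C, ?_⟩
  rintro r ⟨x, hx, rfl⟩
  have h1 : (⟪A x, x⟫_ℂ).re = 1 := by
    have := Real.sqrt_eq_one.mp hx
    exact this
  have := hpt x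
  rw [h1, mul_one] at this
  exact this

/-- scaled numerical radius bound -/
lemma mywA_elem (A T : H →L[ℂ] H) (hA : A.IsPositive)
    (hbdd : BddAbove {r : ℝ | ∃ x : H, aNorm A x = 1 ∧ r = ‖⟪A (T x), x⟫_ℂ‖}) (z : H) :
    ‖⟪A (T z), z⟫_ℂ‖ ≤ wA A T * (⟪A z, z⟫_ℂ).re := by
  rcases eq_or_lt_of_le (myPnn A hA z) with h0 | h0
  · have hcs := myCS2 A hA (T z) z
    rw [← h0, mul_zero] at hcs
    have : ‖⟪A (T z), z⟫_ℂ‖ = 0 := by nlinarith [norm_nonneg ⟪A (T z), z⟫_ℂ]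
    rw [this, ← h0, mul_zero]
  · set r := aNorm A z with hr
    have hrpos : 0 < r := Real.sqrt_pos.mpr h0
    have hr2 : r ^ 2 = (⟪A z, z⟫_ℂ).re := myaNorm_sq A hA z
    set u := ((r : ℂ))⁻¹ • z with hu
    have hTu : T u = ((r : ℂ))⁻¹ • T z := by rw [hu, map_smul]
    have hinner : ⟪A (T u), u⟫_ℂ = ((r : ℂ))⁻¹ * ((r : ℂ))⁻¹ * ⟪A (T z), z⟫_ℂ := by
      rw [hTu, hu, map_smul, inner_smul_left, inner_smul_right]
      rw [Complex.conj_inv, Complex.conj_ofReal]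
      ring
    have hinner2 : ⟪A u, u⟫_ℂ = ((r : ℂ))⁻¹ * ((r : ℂ))⁻¹ * ⟪A z, z⟫_ℂ := by
      rw [hu, map_smul, inner_smul_left, inner_smul_right]
      rw [Complex.conj_inv, Complex.conj_ofReal]
      ring
    have hu1 : aNorm A u = 1 := by
      unfold aNorm
      rw [hinner2]
      have : (((r:ℂ))⁻¹ * ((r:ℂ))⁻¹ * ⟪A z, z⟫_ℂ).re = r⁻¹ * r⁻¹ * (⟪A z, z⟫_ℂ).re := by
        rw [← Complex.ofReal_inv, ← Complex.ofReal_mul, Complex.re_ofReal_mul]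
      rw [this, ← hr2]
      have : r⁻¹ * r⁻¹ * r ^ 2 = 1 := by field_simp
      rw [this, Real.sqrt_one]
    have hmem : ‖⟪A (T u), u⟫_ℂ‖ ∈ {r : ℝ | ∃ x : H, aNorm A x = 1 ∧ r = ‖⟪A (T x), x⟫_ℂ‖} :=
      ⟨u, hu1, rfl⟩
    have hle := le_csSup hbdd hmem
    rw [hinner] at hle
    rw [norm_mul, norm_mul] at hle
    have hnr : ‖((r:ℂ))⁻¹‖ = r⁻¹ := by
      rw [norm_inv, Complex.norm_real, Real.norm_eq_abs, abs_of_pos hrpos]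
    rw [hnr] at hle
    -- hle : r⁻¹ * r⁻¹ * ‖⟪A (T z), z⟫‖ ≤ wA A T
    have := mul_le_mul_of_nonneg_right hle (le_of_lt (mul_pos hrpos hrpos))
    calc ‖⟪A (T z), z⟫_ℂ‖ = (r⁻¹ * (r⁻¹ * ‖⟪A (T z), z⟫_ℂ‖)) * (r * r) := by
          field_simp
      _ ≤ wA A T * (r * r) := by
          apply mul_le_mul_of_nonneg_right _ (le_of_lt (mul_pos hrpos hrpos))
          calc r⁻¹ * (r⁻¹ * ‖⟪A (T z), z⟫_ℂ‖) = r⁻¹ * r⁻¹ * ‖⟪A (T z), z⟫_ℂ‖ := by ring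
            _ ≤ wA A T := hle
      _ = wA A T * (⟪A z, z⟫_ℂ).re := by rw [← hr2]; ring



/-- real part of conjugate-symmetric cross terms -/
lemma mycross (A : H →L[ℂ] H) (hA : A.IsPositive) (u v : H) :
    ⟪A v, u⟫_ℂ = (starRingEnd ℂ) ⟪A u, v⟫_ℂ := by
  rw [← inner_conj_symm, myhsa A hA u v]

/-- parallelogram -/
lemma mypar1 (A : H →L[ℂ] H) (hA : A.IsPositive) (u v : H) :
    (⟪A (u + v), u + v⟫_ℂ).re + (⟪A (u - v), u - v⟫_ℂ).re
      = 2 * (⟪A u, u⟫_ℂ).re + 2 * (⟪A v, v⟫_ℂ).re := by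
  have h : ⟪A (u + v), u + v⟫_ℂ + ⟪A (u - v), u - v⟫_ℂ
      = 2 * ⟪A u, u⟫_ℂ + 2 * ⟪A v, v⟫_ℂ := by
    simp only [map_add, map_sub, inner_add_left, inner_add_right, inner_sub_left,
      inner_sub_right]
    ring
  have := congrArg Complex.re h
  simpa [Complex.add_re, Complex.mul_re] using this

lemma mypar2 (A : H →L[ℂ] H) (hA : A.IsPositive) (u v : H) :
    (⟪A (u + Complex.I • v), u + Complex.I • v⟫_ℂ).re
      + (⟪A (u - Complex.I • v), u - Complex.I • v⟫_ℂ).re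
      = 2 * (⟪A u, u⟫_ℂ).re + 2 * (⟪A v, v⟫_ℂ).re := by
  have h : ⟪A (u + Complex.I • v), u + Complex.I • v⟫_ℂ
      + ⟪A (u - Complex.I • v), u - Complex.I • v⟫_ℂ
      = 2 * ⟪A u, u⟫_ℂ + 2 * ⟪A v, v⟫_ℂ := by
    simp only [map_add, map_sub, map_smul, inner_add_left, inner_add_right, inner_sub_left,
      inner_sub_right, inner_smul_left, inner_smul_right, Complex.conj_I]
    ring_nf
    rw [Complex.I_sq]
    ring
  have := congrArg Complex.re h
  simpa [Complex.add_re, Complex.mul_re] using this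

/-- polarization bound : |⟨A T u, v⟩| ≤ w_A(T) (‖u‖_A² + ‖v‖_A²) -/
lemma mypolar (A T : H →L[ℂ] H) (hA : A.IsPositive)
    (hbdd : BddAbove {r : ℝ | ∃ x : H, aNorm A x = 1 ∧ r = ‖⟪A (T x), x⟫_ℂ‖}) (u v : H) :
    ‖⟪A (T u), v⟫_ℂ‖ ≤ wA A T * ((⟪A u, u⟫_ℂ).re + (⟪A v, v⟫_ℂ).re) := by
  have hid : ⟪A (T u), v⟫_ℂ
      = (1/4 : ℂ) * (⟪A (T (u + v)), u + v⟫_ℂ - ⟪A (T (u - v)), u - v⟫_ℂ)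
        - (Complex.I/4) * (⟪A (T (u + Complex.I • v)), u + Complex.I • v⟫_ℂ
            - ⟪A (T (u - Complex.I • v)), u - Complex.I • v⟫_ℂ) := by
    simp only [map_add, map_sub, map_smul, inner_add_left, inner_add_right, inner_sub_left,
      inner_sub_right, inner_smul_left, inner_smul_right, Complex.conj_I]
    ring_nf
    simp [Complex.I_sq]
    ring
  rw [hid]
  have e1 := mywA_elem A T hA hbdd (u + v)
  have e2 := mywA_elem A T hA hbdd (u - v)
  have e3 := mywA_elem A T hA hbdd (u + Complex.I • v)
  have e4 := mywA_elem A T hA hbdd (u - Complex.I • v)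
  have hp1 := mypar1 A hA u v
  have hp2 := mypar2 A hA u v
  have hnorm : ‖(1/4 : ℂ) * (⟪A (T (u + v)), u + v⟫_ℂ - ⟪A (T (u - v)), u - v⟫_ℂ)
        - (Complex.I/4) * (⟪A (T (u + Complex.I • v)), u + Complex.I • v⟫_ℂ
            - ⟪A (T (u - Complex.I • v)), u - Complex.I • v⟫_ℂ)‖
      ≤ (1/4) * (‖⟪A (T (u + v)), u + v⟫_ℂ‖ + ‖⟪A (T (u - v)), u - v⟫_ℂ‖)
        + (1/4) * (‖⟪A (T (u + Complex.I • v)), u + Complex.I • v⟫_ℂ‖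
            + ‖⟪A (T (u - Complex.I • v)), u - Complex.I • v⟫_ℂ‖) := by
    calc _ ≤ ‖(1/4 : ℂ) * (⟪A (T (u + v)), u + v⟫_ℂ - ⟪A (T (u - v)), u - v⟫_ℂ)‖
          + ‖(Complex.I/4) * (⟪A (T (u + Complex.I • v)), u + Complex.I • v⟫_ℂ
            - ⟪A (T (u - Complex.I • v)), u - Complex.I • v⟫_ℂ)‖ := norm_sub_le _ _
      _ ≤ _ := by
          rw [norm_mul, norm_mul]
          have h14 : ‖(1/4 : ℂ)‖ = 1/4 := by norm_num
          have hI4 : ‖(Complex.I/4 : ℂ)‖ = 1/4 := by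
            rw [norm_div]; simp [Complex.norm_I]
          rw [h14, hI4]
          have d1 := norm_sub_le (⟪A (T (u + v)), u + v⟫_ℂ) (⟪A (T (u - v)), u - v⟫_ℂ)
          have d2 := norm_sub_le (⟪A (T (u + Complex.I • v)), u + Complex.I • v⟫_ℂ)
            (⟪A (T (u - Complex.I • v)), u - Complex.I • v⟫_ℂ)
          linarith
  refine hnorm.trans ?_
  have hw := mywA_nonneg A T
  have key1 : wA A T * (⟪A (u+v), u+v⟫_ℂ).re + wA A T * (⟪A (u-v), u-v⟫_ℂ).re
      = wA A T * (2 * (⟪A u, u⟫_ℂ).re + 2 * (⟪A v, v⟫_ℂ).re) := by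
    rw [← mul_add, hp1]
  have key2 : wA A T * (⟪A (u + Complex.I • v), u + Complex.I • v⟫_ℂ).re
        + wA A T * (⟪A (u - Complex.I • v), u - Complex.I • v⟫_ℂ).re
      = wA A T * (2 * (⟪A u, u⟫_ℂ).re + 2 * (⟪A v, v⟫_ℂ).re) := by
    rw [← mul_add, hp2]
  nlinarith [e1, e2, e3, e4, key1, key2]



/-- `‖T‖_A ≤ 2 w_A(T)` -/
lemma myopnorm_le (A T : H →L[ℂ] H) (hA : A.IsPositive)
    (hbdd : BddAbove {r : ℝ | ∃ x : H, aNorm A x = 1 ∧ r = ‖⟪A (T x), x⟫_ℂ‖}) :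
    aOpNorm A T ≤ 2 * wA A T := by
  apply Real.sSup_le _ (by linarith [mywA_nonneg A T])
  rintro r ⟨x, hxcl, hx1, rfl⟩
  rcases eq_or_lt_of_le (myaNorm_nonneg A (T x)) with h0 | h0
  · rw [← h0]; linarith [mywA_nonneg A T]
  · set s := aNorm A (T x) with hs
    have hs2 : s ^ 2 = (⟪A (T x), T x⟫_ℂ).re := myaNorm_sq A hA (T x)
    set y := ((s : ℂ))⁻¹ • (T x) with hy
    have hip : ⟪A (T x), y⟫_ℂ = ((s : ℂ))⁻¹ * ⟪A (T x), T x⟫_ℂ := by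
      rw [hy, inner_smul_right]
    have hreal : ⟪A (T x), T x⟫_ℂ = ((s ^ 2 : ℝ) : ℂ) := by
      have h := mycross A hA (T x) (T x)
      have him : ⟪A (T x), T x⟫_ℂ = ((⟪A (T x), T x⟫_ℂ).re : ℂ) :=
        (Complex.conj_eq_iff_re.mp h.symm).symm
      rw [him, hs2]
    have hnorm : ‖⟪A (T x), y⟫_ℂ‖ = s := by
      rw [hip, hreal, norm_mul]
      rw [norm_inv, Complex.norm_real, Complex.norm_real]
      rw [Real.norm_eq_abs, Real.norm_eq_abs, abs_of_pos h0, abs_of_nonneg (sq_nonneg s)]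
      field_simp
    have hyA : (⟪A y, y⟫_ℂ).re = 1 := by
      have : ⟪A y, y⟫_ℂ = ((s:ℂ))⁻¹ * ((s:ℂ))⁻¹ * ⟪A (T x), T x⟫_ℂ := by
        rw [hy, map_smul, inner_smul_left, inner_smul_right, Complex.conj_inv,
          Complex.conj_ofReal]
        ring
      rw [this, hreal]
      rw [← Complex.ofReal_inv, ← Complex.ofReal_mul, ← Complex.ofReal_mul]
      rw [Complex.ofReal_re]
      field_simp
    have hxA : (⟪A x, x⟫_ℂ).re = 1 := Real.sqrt_eq_one.mp hx1
    have := mypolar A T hA hbdd x y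
    rw [hnorm, hxA, hyA] at this
    linarith [this]

lemma mywA_add (A T1 T2 : H →L[ℂ] H) (hA : A.IsPositive)
    (hb1 : BddAbove {r : ℝ | ∃ x : H, aNorm A x = 1 ∧ r = ‖⟪A (T1 x), x⟫_ℂ‖})
    (hb2 : BddAbove {r : ℝ | ∃ x : H, aNorm A x = 1 ∧ r = ‖⟪A (T2 x), x⟫_ℂ‖}) :
    wA A (T1 + T2) ≤ wA A T1 + wA A T2 := by
  apply Real.sSup_le _ (by linarith [mywA_nonneg A T1, mywA_nonneg A T2])
  rintro r ⟨x, hx, rfl⟩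
  have hxA : (⟪A x, x⟫_ℂ).re = 1 := Real.sqrt_eq_one.mp hx
  have h : ⟪A ((T1 + T2) x), x⟫_ℂ = ⟪A (T1 x), x⟫_ℂ + ⟪A (T2 x), x⟫_ℂ := by
    rw [ContinuousLinearMap.add_apply, map_add, inner_add_left]
  rw [h]
  calc ‖⟪A (T1 x), x⟫_ℂ + ⟪A (T2 x), x⟫_ℂ‖ ≤ ‖⟪A (T1 x), x⟫_ℂ‖ + ‖⟪A (T2 x), x⟫_ℂ‖ :=
        norm_add_le _ _
    _ ≤ wA A T1 * (⟪A x, x⟫_ℂ).re + wA A T2 * (⟪A x, x⟫_ℂ).re :=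
        add_le_add (mywA_elem A T1 hA hb1 x) (mywA_elem A T2 hA hb2 x)
    _ = wA A T1 + wA A T2 := by rw [hxA]; ring

lemma mywA_sub (A T1 T2 : H →L[ℂ] H) (hA : A.IsPositive)
    (hb1 : BddAbove {r : ℝ | ∃ x : H, aNorm A x = 1 ∧ r = ‖⟪A (T1 x), x⟫_ℂ‖})
    (hb2 : BddAbove {r : ℝ | ∃ x : H, aNorm A x = 1 ∧ r = ‖⟪A (T2 x), x⟫_ℂ‖}) :
    wA A (T1 - T2) ≤ wA A T1 + wA A T2 := by
  apply Real.sSup_le _ (by linarith [mywA_nonneg A T1, mywA_nonneg A T2])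
  rintro r ⟨x, hx, rfl⟩
  have hxA : (⟪A x, x⟫_ℂ).re = 1 := Real.sqrt_eq_one.mp hx
  have h : ⟪A ((T1 - T2) x), x⟫_ℂ = ⟪A (T1 x), x⟫_ℂ - ⟪A (T2 x), x⟫_ℂ := by
    rw [ContinuousLinearMap.sub_apply, map_sub, inner_sub_left]
  rw [h]
  calc ‖⟪A (T1 x), x⟫_ℂ - ⟪A (T2 x), x⟫_ℂ‖ ≤ ‖⟪A (T1 x), x⟫_ℂ‖ + ‖⟪A (T2 x), x⟫_ℂ‖ :=
        norm_sub_le _ _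
    _ ≤ wA A T1 * (⟪A x, x⟫_ℂ).re + wA A T2 * (⟪A x, x⟫_ℂ).re :=
        add_le_add (mywA_elem A T1 hA hb1 x) (mywA_elem A T2 hA hb2 x)
    _ = wA A T1 + wA A T2 := by rw [hxA]; ring

/-- w_B of the off-diagonal matrix is at most (w_A(T1+T2)+w_A(T1-T2))/2 -/
lemma mywB_le (A T1 T2 : H →L[ℂ] H) (hA : A.IsPositive)
    (hbP : BddAbove {r : ℝ | ∃ x : H, aNorm A x = 1 ∧ r = ‖⟪A ((T1 + T2) x), x⟫_ℂ‖})
    (hbQ : BddAbove {r : ℝ | ∃ x : H, aNorm A x = 1 ∧ r = ‖⟪A ((T1 - T2) x), x⟫_ℂ‖}) :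
    wB A 0 T1 T2 0 ≤ (wA A (T1 + T2) + wA A (T1 - T2)) / 2 := by
  apply Real.sSup_le _ (by linarith [mywA_nonneg A (T1 + T2), mywA_nonneg A (T1 - T2)])
  rintro r ⟨x, y, hxy, rfl⟩
  have hsum : (⟪A x, x⟫_ℂ).re + (⟪A y, y⟫_ℂ).re = 1 := Real.sqrt_eq_one.mp hxy
  have hzero : ⟪A ((0 : H →L[ℂ] H) x + T1 y), x⟫_ℂ + ⟪A (T2 x + (0 : H →L[ℂ] H) y), y⟫_ℂ
      = ⟪A (T1 y), x⟫_ℂ + ⟪A (T2 x), y⟫_ℂ := by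
    simp
  rw [hzero]
  have hid : ⟪A (T1 y), x⟫_ℂ + ⟪A (T2 x), y⟫_ℂ
      = (1/4 : ℂ) * (⟪A ((T1 + T2) (x + y)), x + y⟫_ℂ - ⟪A ((T1 + T2) (x - y)), x - y⟫_ℂ)
        + (Complex.I/4) * (⟪A ((T1 - T2) (x + Complex.I • y)), x + Complex.I • y⟫_ℂ
            - ⟪A ((T1 - T2) (x - Complex.I • y)), x - Complex.I • y⟫_ℂ) := by
    simp only [ContinuousLinearMap.add_apply, ContinuousLinearMap.sub_apply, map_add, map_sub,
      map_smul, inner_add_left, inner_add_right, inner_sub_left, inner_sub_right,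
      inner_smul_left, inner_smul_right, Complex.conj_I]
    ring_nf
    rw [Complex.I_sq]
    ring
  rw [hid]
  set P := T1 + T2
  set Q := T1 - T2
  have e1 := mywA_elem A P hA hbP (x + y)
  have e2 := mywA_elem A P hA hbP (x - y)
  have e3 := mywA_elem A Q hA hbQ (x + Complex.I • y)
  have e4 := mywA_elem A Q hA hbQ (x - Complex.I • y)
  have hp1 := mypar1 A hA x y
  have hp2 := mypar2 A hA x y
  have key1 : wA A P * (⟪A (x+y), x+y⟫_ℂ).re + wA A P * (⟪A (x-y), x-y⟫_ℂ).re
      = wA A P * (2 * (⟪A x, x⟫_ℂ).re + 2 * (⟪A y, y⟫_ℂ).re) := by rw [← mul_add, hp1]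
  have key2 : wA A Q * (⟪A (x + Complex.I • y), x + Complex.I • y⟫_ℂ).re
        + wA A Q * (⟪A (x - Complex.I • y), x - Complex.I • y⟫_ℂ).re
      = wA A Q * (2 * (⟪A x, x⟫_ℂ).re + 2 * (⟪A y, y⟫_ℂ).re) := by rw [← mul_add, hp2]
  have hnorm : ‖(1/4 : ℂ) * (⟪A (P (x + y)), x + y⟫_ℂ - ⟪A (P (x - y)), x - y⟫_ℂ)
        + (Complex.I/4) * (⟪A (Q (x + Complex.I • y)), x + Complex.I • y⟫_ℂ
            - ⟪A (Q (x - Complex.I • y)), x - Complex.I • y⟫_ℂ)‖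
      ≤ (1/4) * (‖⟪A (P (x + y)), x + y⟫_ℂ‖ + ‖⟪A (P (x - y)), x - y⟫_ℂ‖)
        + (1/4) * (‖⟪A (Q (x + Complex.I • y)), x + Complex.I • y⟫_ℂ‖
            + ‖⟪A (Q (x - Complex.I • y)), x - Complex.I • y⟫_ℂ‖) := by
    calc _ ≤ ‖(1/4 : ℂ) * (⟪A (P (x + y)), x + y⟫_ℂ - ⟪A (P (x - y)), x - y⟫_ℂ)‖
          + ‖(Complex.I/4) * (⟪A (Q (x + Complex.I • y)), x + Complex.I • y⟫_ℂ
            - ⟪A (Q (x - Complex.I • y)), x - Complex.I • y⟫_ℂ)‖ := norm_add_le _ _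
      _ ≤ _ := by
          rw [norm_mul, norm_mul]
          have h14 : ‖(1/4 : ℂ)‖ = 1/4 := by norm_num
          have hI4 : ‖(Complex.I/4 : ℂ)‖ = 1/4 := by
            rw [norm_div]; simp [Complex.norm_I]
          rw [h14, hI4]
          have d1 := norm_sub_le (⟪A (P (x + y)), x + y⟫_ℂ) (⟪A (P (x - y)), x - y⟫_ℂ)
          have d2 := norm_sub_le (⟪A (Q (x + Complex.I • y)), x + Complex.I • y⟫_ℂ)
            (⟪A (Q (x - Complex.I • y)), x - Complex.I • y⟫_ℂ)
          linarith
  refine hnorm.trans ?_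
  have hwP := mywA_nonneg A P
  have hwQ := mywA_nonneg A Q
  nlinarith [e1, e2, e3, e4, key1, key2, hsum]


theorem stmt19 (A T1 T2 : H →L[ℂ] H) (hA : A.IsPositive) (hA' : ∀ x : H, x ≠ 0 → 0 < (⟪A x, x⟫_ℂ).re)
    (h1 : ∃ S : H →L[ℂ] H, A ∘L S = (ContinuousLinearMap.adjoint T1) ∘L A)
    (h2 : ∃ S : H →L[ℂ] H, A ∘L S = (ContinuousLinearMap.adjoint T2) ∘L A) :
    wB A 0 T1 T2 0 + (aOpNorm A T1 + aOpNorm A T2) / 2 +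
        (1 / 2) * |wA A (T1 + T2) - (aOpNorm A T1 + aOpNorm A T2) / 2| +
        (1 / 2) * |wA A (T1 - T2) - (aOpNorm A T1 + aOpNorm A T2) / 2| ≤
      2 * (wA A T1 + wA A T2) := by
  obtain ⟨C1, hC1nn, hC1⟩ := myexists_bound A T1 hA h1
  obtain ⟨C2, hC2nn, hC2⟩ := myexists_bound A T2 hA h2
  have hb1 := mybdd A T1 C1 hC1
  have hb2 := mybdd A T2 C2 hC2
  have hptP : ∀ x : H, ‖⟪A ((T1 + T2) x), x⟫_ℂ‖ ≤ (C1 + C2) * (⟪A x, x⟫_ℂ).re := by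
    intro x
    have h : ⟪A ((T1 + T2) x), x⟫_ℂ = ⟪A (T1 x), x⟫_ℂ + ⟪A (T2 x), x⟫_ℂ := by
      rw [ContinuousLinearMap.add_apply, map_add, inner_add_left]
    rw [h]
    calc ‖⟪A (T1 x), x⟫_ℂ + ⟪A (T2 x), x⟫_ℂ‖
        ≤ ‖⟪A (T1 x), x⟫_ℂ‖ + ‖⟪A (T2 x), x⟫_ℂ‖ := norm_add_le _ _
      _ ≤ C1 * (⟪A x, x⟫_ℂ).re + C2 * (⟪A x, x⟫_ℂ).re := add_le_add (hC1 x) (hC2 x)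
      _ = (C1 + C2) * (⟪A x, x⟫_ℂ).re := by ring
  have hptQ : ∀ x : H, ‖⟪A ((T1 - T2) x), x⟫_ℂ‖ ≤ (C1 + C2) * (⟪A x, x⟫_ℂ).re := by
    intro x
    have h : ⟪A ((T1 - T2) x), x⟫_ℂ = ⟪A (T1 x), x⟫_ℂ - ⟪A (T2 x), x⟫_ℂ := by
      rw [ContinuousLinearMap.sub_apply, map_sub, inner_sub_left]
    rw [h]
    calc ‖⟪A (T1 x), x⟫_ℂ - ⟪A (T2 x), x⟫_ℂ‖
        ≤ ‖⟪A (T1 x), x⟫_ℂ‖ + ‖⟪A (T2 x), x⟫_ℂ‖ := norm_sub_le _ _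
      _ ≤ C1 * (⟪A x, x⟫_ℂ).re + C2 * (⟪A x, x⟫_ℂ).re := add_le_add (hC1 x) (hC2 x)
      _ = (C1 + C2) * (⟪A x, x⟫_ℂ).re := by ring
  have hbP := mybdd A (T1 + T2) (C1 + C2) hptP
  have hbQ := mybdd A (T1 - T2) (C1 + C2) hptQ
  have hWB := mywB_le A T1 T2 hA hbP hbQ
  have hX := mywA_add A T1 T2 hA hb1 hb2
  have hY := mywA_sub A T1 T2 hA hb1 hb2
  have hN1 := myopnorm_le A T1 hA hb1
  have hN2 := myopnorm_le A T2 hA hb2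
  rcases abs_cases (wA A (T1 + T2) - (aOpNorm A T1 + aOpNorm A T2) / 2) with ⟨e1, f1⟩ | ⟨e1, f1⟩ <;>
    rcases abs_cases (wA A (T1 - T2) - (aOpNorm A T1 + aOpNorm A T2) / 2) with ⟨e2, f2⟩ | ⟨e2, f2⟩ <;>
    rw [e1, e2] <;> linarith [hWB, hX, hY, hN1, hN2]
end
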